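/- arXiv:1801.09160 — 6 statements merged into one kernel-verified Lean document; each statement's English description precedes it below -/
import Mathlib

section
/- Let q > 1 be an integer and let χ be an odd primitive Dirichlet character with conductor q (odd means χ(−1) = −1). Then the limit as N → ∞ of the partial products ∏_{k=2}^{N} (1 − χ(k)/k) exists and equals (π·2^{φ(q)/2}) / (q·ε(q)) · ∏_{2 ≤ j ≤ ⌊(q−1)/2⌋, gcd(j,q)=1} sin(π·(j − χ(j))/q), where sin is the complex sine function. -/
open Filter Finset

/-- `ε(q) = √p` if `q` is a power of a prime `p`, and `ε(q) = 1` otherwise. -/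
noncomputable def eps (q : ℕ) : ℝ :=
  if IsPrimePow q then Real.sqrt q.minFac else 1

open Filter Finset Real

noncomputable section

lemma tendsto_ratio (b : ℂ) (c : ℝ) (h1 : c < 1) :
    Tendsto (fun N : ℕ => ((N : ℂ) + 1 - b) / ((N : ℂ) + 1 - (c : ℂ))) atTop (nhds 1) := by
  have hne : ∀ N : ℕ, ((N : ℝ) + 1 - c) ≠ 0 := by
    intro N
    have : (0:ℝ) < (N:ℝ) + 1 - c := by
      have : (0:ℝ) ≤ (N:ℝ) := Nat.cast_nonneg N
      linarith
    linarith
  have key : ∀ N : ℕ, ((N : ℂ) + 1 - b) / ((N : ℂ) + 1 - (c : ℂ))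
      = 1 + ((c : ℂ) - b) * ((((N : ℝ) + 1 - c)⁻¹ : ℝ) : ℂ) := by
    intro N
    have h0 : ((N : ℂ) + 1 - (c : ℂ)) ≠ 0 := by
      have := hne N
      intro h
      apply this
      have : (((N : ℝ) + 1 - c : ℝ) : ℂ) = 0 := by push_cast; push_cast at h; linear_combination h
      exact_mod_cast this
    rw [Complex.ofReal_inv]
    have h0' : (((N : ℝ) + 1 - c : ℝ) : ℂ) ≠ 0 := by
      rw [show (((N : ℝ) + 1 - c : ℝ) : ℂ) = ((N : ℂ) + 1 - (c : ℂ)) by push_cast; ring]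
      exact h0
    field_simp
    push_cast
    ring

  rw [tendsto_congr key]
  have hinv : Tendsto (fun N : ℕ => ((N : ℝ) + 1 - c)⁻¹) atTop (nhds 0) := by
    apply tendsto_inv_atTop_zero.comp
    have : Tendsto (fun N : ℕ => (N : ℝ) + (1 - c)) atTop atTop :=
      tendsto_atTop_add_const_right _ _ tendsto_natCast_atTop_atTop
    exact this.congr (by intro n; ring)
  have : Tendsto (fun N : ℕ => ((((N : ℝ) + 1 - c)⁻¹ : ℝ) : ℂ)) atTop (nhds ((0:ℝ):ℂ)) :=
    (Complex.continuous_ofReal.tendsto 0).comp hinv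
  rw [Complex.ofReal_zero] at this
  have := ((tendsto_const_nhds (x := ((c : ℂ) - b))).mul this).const_add 1
  simpa using this

end

noncomputable section
open Filter Finset Real

lemma step1 (z : ℂ) : ∀ N : ℕ, ∏ m ∈ range (N+1), (((m:ℂ) + z) * ((m:ℂ) + 1 - z))
    = z * ((N:ℂ) + 1 - z) * ∏ m ∈ range N, (((m:ℂ)+1)^2 - z^2) := by
  intro N
  induction N with
  | zero => norm_num
  | succ N ih =>
      rw [prod_range_succ, ih, prod_range_succ]
      push_cast
      ring

lemma step2 (z : ℂ) (N : ℕ) : ∏ m ∈ range N, (((m:ℂ)+1)^2 - z^2)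
    = (∏ m ∈ range N, ((m:ℂ)+1)^2) * ∏ m ∈ range N, (1 - z^2/((m:ℂ)+1)^2) := by
  rw [← prod_mul_distrib]
  apply prod_congr rfl
  intro m _
  have hm : ((m:ℂ)+1) ≠ 0 := Nat.cast_add_one_ne_zero m
  field_simp

lemma pair_lim (b : ℂ) (c : ℝ) (h0 : 0 < c) (h1 : c < 1) :
    Tendsto (fun N : ℕ => ∏ m ∈ range N,
        ((((m:ℂ)) + b) * ((m:ℂ) + 1 - b)) / ((((m:ℂ)) + (c:ℂ)) * ((m:ℂ) + 1 - (c:ℂ))))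
      atTop (nhds (Complex.sin ((Real.pi : ℂ) * b) / ((Real.sin (Real.pi * c) : ℝ) : ℂ))) := by
  have hKne : ∀ N : ℕ, (∏ m ∈ range N, ((m:ℂ)+1)^2) ≠ 0 := by
    intro N
    apply prod_ne_zero_iff.2
    intro m _
    exact pow_ne_zero _ (Nat.cast_add_one_ne_zero m)
  have hQcfac : ∀ m : ℕ, (1 - ((c:ℂ))^2/((m:ℂ)+1)^2) ≠ 0 := by
    intro m
    have : (1 - (c:ℂ)^2/((m:ℂ)+1)^2) = (((1 - c^2/((m:ℝ)+1)^2 : ℝ)) : ℂ) := by push_cast; ring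
    rw [this]
    have hm1 : (0:ℝ) < (m:ℝ)+1 := by positivity
    have hlt : c^2 < ((m:ℝ)+1)^2 := by
      have : c^2 < 1 := by nlinarith
      have : (1:ℝ) ≤ ((m:ℝ)+1)^2 := by nlinarith [(Nat.cast_nonneg m : (0:ℝ) ≤ (m:ℝ))]
      nlinarith
    have : (0:ℝ) < 1 - c^2/((m:ℝ)+1)^2 := by
      rw [sub_pos, div_lt_one (by positivity)]
      exact hlt
    exact_mod_cast this.ne'
  have hQcne : ∀ N : ℕ, (∏ m ∈ range N, (1 - ((c:ℂ))^2/((m:ℂ)+1)^2)) ≠ 0 := fun N =>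
    prod_ne_zero_iff.2 fun m _ => hQcfac m
  have hNcne : ∀ N : ℕ, ((N:ℂ) + 1 - (c:ℂ)) ≠ 0 := by
    intro N
    have h : (0:ℝ) < (N:ℝ) + 1 - c := by
      have : (0:ℝ) ≤ (N:ℝ) := Nat.cast_nonneg N
      linarith
    intro hcon
    have : (((N:ℝ) + 1 - c : ℝ) : ℂ) = 0 := by push_cast; linear_combination hcon
    exact h.ne' (by exact_mod_cast this)
  have hcne : ((c:ℂ)) ≠ 0 := by exact_mod_cast h0.ne'
  have hpi : ((Real.pi : ℝ) : ℂ) ≠ 0 := by exact_mod_cast Real.pi_ne_zero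
  have key : ∀ N : ℕ, ∏ m ∈ range (N+1),
        ((((m:ℂ)) + b) * ((m:ℂ) + 1 - b)) / ((((m:ℂ)) + (c:ℂ)) * ((m:ℂ) + 1 - (c:ℂ)))
      = (((Real.pi : ℂ) * b * ∏ m ∈ range N, (1 - b^2/((m:ℂ)+1)^2)) /
         ((Real.pi : ℂ) * (c:ℂ) * ∏ m ∈ range N, (1 - ((c:ℂ))^2/((m:ℂ)+1)^2))) *
        (((N:ℂ) + 1 - b) / ((N:ℂ) + 1 - (c:ℂ))) := by
    intro N
    rw [prod_div_distrib, step1 b N, step1 (c:ℂ) N, step2 b N, step2 (c:ℂ) N,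
      div_mul_div_comm, div_eq_div_iff
        (by exact mul_ne_zero (mul_ne_zero hcne (hNcne N)) (mul_ne_zero (hKne N) (hQcne N)))
        (by exact mul_ne_zero (mul_ne_zero (mul_ne_zero hpi hcne) (hQcne N)) (hNcne N))]
    ring
  rw [← tendsto_add_atTop_iff_nat 1]
  rw [tendsto_congr key]
  have hEb := Complex.tendsto_euler_sin_prod b
  have hEc := Complex.tendsto_euler_sin_prod (c:ℂ)
  have hsin_ne : ((Real.sin (Real.pi * c) : ℝ) : ℂ) ≠ 0 := by
    have : 0 < Real.sin (Real.pi * c) :=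
      Real.sin_pos_of_pos_of_lt_pi (by positivity) (by nlinarith [Real.pi_pos])
    exact_mod_cast this.ne'
  have hsinc : Complex.sin ((Real.pi:ℂ) * (c:ℂ)) = ((Real.sin (Real.pi * c) : ℝ) : ℂ) := by
    rw [← Complex.ofReal_mul, Complex.ofReal_sin]
  rw [hsinc] at hEc
  have hdiv := hEb.div hEc hsin_ne
  have := hdiv.mul (tendsto_ratio b c h1)
  simpa using this

end

noncomputable section
open Filter Finset Real

lemma one_pair_lim (c : ℝ) (h0 : 0 < c) (h1 : c < 1) :
    Tendsto (fun N : ℕ => ∏ m ∈ range N,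
        (((m:ℂ) + 1) * ((m:ℂ) + 1)) / ((((m:ℂ)) + 1 + (c:ℂ)) * ((m:ℂ) + 1 - (c:ℂ))))
      atTop (nhds (((Real.pi * c : ℝ) : ℂ) / ((Real.sin (Real.pi * c) : ℝ) : ℂ))) := by
  have hcne : ((c:ℂ)) ≠ 0 := by exact_mod_cast h0.ne'
  have hpi : ((Real.pi : ℝ) : ℂ) ≠ 0 := by exact_mod_cast Real.pi_ne_zero
  have hQcfac : ∀ m : ℕ, (1 - ((c:ℂ))^2/((m:ℂ)+1)^2) ≠ 0 := by
    intro m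
    have : (1 - (c:ℂ)^2/((m:ℂ)+1)^2) = (((1 - c^2/((m:ℝ)+1)^2 : ℝ)) : ℂ) := by push_cast; ring
    rw [this]
    have hlt : c^2 < ((m:ℝ)+1)^2 := by
      have h2 : c^2 < 1 := by nlinarith
      have h3 : (1:ℝ) ≤ ((m:ℝ)+1)^2 := by nlinarith [(Nat.cast_nonneg m : (0:ℝ) ≤ (m:ℝ))]
      nlinarith
    have : (0:ℝ) < 1 - c^2/((m:ℝ)+1)^2 := by
      rw [sub_pos, div_lt_one (by positivity)]
      exact hlt
    exact_mod_cast this.ne'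
  have key : ∀ N : ℕ, ∏ m ∈ range N,
        (((m:ℂ) + 1) * ((m:ℂ) + 1)) / ((((m:ℂ)) + 1 + (c:ℂ)) * ((m:ℂ) + 1 - (c:ℂ)))
      = ((Real.pi : ℂ) * (c:ℂ)) /
        ((Real.pi : ℂ) * (c:ℂ) * ∏ m ∈ range N, (1 - ((c:ℂ))^2/((m:ℂ)+1)^2)) := by
    intro N
    have hprod : ∏ m ∈ range N,
        (((m:ℂ) + 1) * ((m:ℂ) + 1)) / ((((m:ℂ)) + 1 + (c:ℂ)) * ((m:ℂ) + 1 - (c:ℂ)))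
        = ∏ m ∈ range N, (1 - ((c:ℂ))^2/((m:ℂ)+1)^2)⁻¹ := by
      apply prod_congr rfl
      intro m _
      have hm : ((m:ℂ)+1) ≠ 0 := Nat.cast_add_one_ne_zero m
      have hden : (((m:ℂ)) + 1 + (c:ℂ)) * ((m:ℂ) + 1 - (c:ℂ)) ≠ 0 := by
        have : (((m:ℂ)) + 1 + (c:ℂ)) * ((m:ℂ) + 1 - (c:ℂ)) = ((m:ℂ)+1)^2 * (1 - ((c:ℂ))^2/((m:ℂ)+1)^2) := by
          field_simp; ring
        rw [this]
        exact mul_ne_zero (pow_ne_zero _ hm) (hQcfac m)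
      have hBZ : (((m:ℂ)) + 1 + (c:ℂ)) * ((m:ℂ) + 1 - (c:ℂ))
          = (((m:ℂ) + 1) * ((m:ℂ) + 1)) * (1 - ((c:ℂ))^2/((m:ℂ)+1)^2) := by
        field_simp; ring
      rw [hBZ, div_mul_cancel_left₀ (mul_ne_zero hm hm)]
    rw [hprod, prod_inv_distrib, div_mul_cancel_left₀ (mul_ne_zero hpi hcne)]
  rw [tendsto_congr key]
  have hEc := Complex.tendsto_euler_sin_prod (c:ℂ)
  have hsin_ne : ((Real.sin (Real.pi * c) : ℝ) : ℂ) ≠ 0 := by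
    have : 0 < Real.sin (Real.pi * c) :=
      Real.sin_pos_of_pos_of_lt_pi (by positivity) (by nlinarith [Real.pi_pos])
    exact_mod_cast this.ne'
  have hsinc : Complex.sin ((Real.pi:ℂ) * (c:ℂ)) = ((Real.sin (Real.pi * c) : ℝ) : ℂ) := by
    rw [← Complex.ofReal_mul, Complex.ofReal_sin]
  rw [hsinc] at hEc
  have := (tendsto_const_nhds (x := ((Real.pi : ℂ) * (c:ℂ)))).div hEc hsin_ne
  rw [Complex.ofReal_mul]
  exact this

end

section comb
open Finset

lemma two_mul_ne (q a : ℕ) (hq : 3 ≤ q) (hg : Nat.gcd a q = 1) : 2 * a ≠ q := by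
  intro he
  have h1 : a ∣ q := ⟨2, by omega⟩
  have h2 : a ∣ Nat.gcd a q := Nat.dvd_gcd dvd_rfl h1
  rw [hg] at h2
  have := Nat.dvd_one.mp h2
  omega

lemma gcd_q_sub (q b : ℕ) (h : b ≤ q) : Nat.gcd (q - b) q = Nat.gcd b q := by
  have h1 := Nat.gcd_sub_self_right (m := q - b) (n := q) (Nat.sub_le q b)
  rw [Nat.sub_sub_self h] at h1
  rw [← h1, Nat.gcd_sub_self_left h, Nat.gcd_comm]

lemma cop_union (q : ℕ) (hq : 3 ≤ q) :
    (Icc 1 (q-1)).filter (fun j => Nat.gcd j q = 1)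
      = ((Icc 1 ((q-1)/2)).filter (fun j => Nat.gcd j q = 1))
        ∪ ((Icc 1 ((q-1)/2)).filter (fun j => Nat.gcd j q = 1)).image (q - ·) := by
  ext a
  simp only [mem_filter, mem_Icc, mem_union, mem_image]
  constructor
  · rintro ⟨⟨h1, h2⟩, hg⟩
    by_cases hc : a ≤ (q-1)/2
    · exact Or.inl ⟨⟨h1, hc⟩, hg⟩
    · refine Or.inr ⟨q - a, ⟨⟨by omega, ?_⟩, ?_⟩, by omega⟩
      · have := two_mul_ne q a hq hg
        omega
      · rw [gcd_q_sub q a (by omega)]; exact hg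
  · rintro (⟨⟨h1, h2⟩, hg⟩ | ⟨b, ⟨⟨h1, h2⟩, hg⟩, rfl⟩)
    · exact ⟨⟨h1, by omega⟩, hg⟩
    · exact ⟨⟨by omega, by omega⟩, by rw [gcd_q_sub q b (by omega)]; exact hg⟩

lemma cop_disj (q : ℕ) (hq : 3 ≤ q) :
    Disjoint ((Icc 1 ((q-1)/2)).filter (fun j => Nat.gcd j q = 1))
      (((Icc 1 ((q-1)/2)).filter (fun j => Nat.gcd j q = 1)).image (q - ·)) := by
  rw [Finset.disjoint_left]
  intro a ha hb
  simp only [mem_filter, mem_Icc, mem_image] at ha hb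
  obtain ⟨b, ⟨⟨hb1, hb2⟩, hbg⟩, rfl⟩ := hb
  have := two_mul_ne q b hq hbg
  omega

lemma pair_prod {M : Type*} [CommMonoid M] (q : ℕ) (hq : 3 ≤ q) (u : ℕ → M) :
    ∏ a ∈ (Icc 1 (q-1)).filter (fun j => Nat.gcd j q = 1), u a
      = ∏ a ∈ (Icc 1 ((q-1)/2)).filter (fun j => Nat.gcd j q = 1), (u a * u (q - a)) := by
  rw [cop_union q hq, prod_union (cop_disj q hq), prod_image ?hinj, ← prod_mul_distrib]
  case hinj =>
    intro x hx y hy hxy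
    simp only [coe_filter, Set.mem_setOf_eq, mem_coe, mem_filter, mem_Icc] at hx hy
    dsimp only at hxy
    omega

lemma totient_eq_twice_card (q : ℕ) (hq : 3 ≤ q) :
    q.totient = 2 * ((Icc 1 ((q-1)/2)).filter (fun j => Nat.gcd j q = 1)).card := by
  have h1 : (Icc 1 (q-1)).filter (fun j => Nat.gcd j q = 1)
      = (range q).filter q.Coprime := by
    ext a
    simp only [mem_filter, mem_Icc, mem_range]
    constructor
    · rintro ⟨⟨h1, h2⟩, hg⟩
      exact ⟨by omega, by rwa [Nat.Coprime, Nat.gcd_comm]⟩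
    · rintro ⟨h1, hg⟩
      rw [Nat.Coprime, Nat.gcd_comm] at hg
      rcases Nat.eq_zero_or_pos a with rfl | ha
      · rw [Nat.gcd_zero_left] at hg; omega
      · exact ⟨⟨ha, by omega⟩, hg⟩
  rw [Nat.totient_eq_card_coprime, ← h1, cop_union q hq,
    card_union_of_disjoint (cop_disj q hq), card_image_of_injOn ?hinj]
  · ring
  case hinj =>
    intro x hx y hy hxy
    simp only [coe_filter, Set.mem_setOf_eq, mem_coe, mem_filter, mem_Icc] at hx hy
    dsimp only at hxy
    omega

end comb


section cyc
open Finset Polynomial Real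

lemma eps_pos (q : ℕ) : 0 < eps q := by
  unfold eps
  split
  · exact Real.sqrt_pos.2 (by exact_mod_cast Nat.minFac_pos q)
  · norm_num

lemma sin_pos_of_S1 (q a : ℕ) (hq : 3 ≤ q) (h1 : 1 ≤ a) (h2 : a ≤ (q-1)/2) :
    0 < Real.sin (Real.pi * a / q) := by
  apply Real.sin_pos_of_pos_of_lt_pi
  · have : (0:ℝ) < (a:ℝ) := by exact_mod_cast h1
    have : (0:ℝ) < (q:ℝ) := by positivity
    positivity
  · have hq0 : (0:ℝ) < (q:ℝ) := by positivity
    rw [div_lt_iff₀ hq0]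
    have haq : (a:ℝ) < (q:ℝ) := by exact_mod_cast (by omega : a < q)
    nlinarith [Real.pi_pos]

lemma prod_two_sin_eq_eps (q : ℕ) (hq : 3 ≤ q) :
    ∏ a ∈ (Icc 1 ((q-1)/2)).filter (fun j => Nat.gcd j q = 1),
      (2 * Real.sin (Real.pi * a / q)) = eps q := by
  have hq0 : q ≠ 0 := by omega
  have hqR : ((q:ℝ)) ≠ 0 := by positivity
  haveI : NeZero q := ⟨hq0⟩
  set ζ : ℂ := Complex.exp (2 * Real.pi * Complex.I / q) with hζdef
  have hζ : IsPrimitiveRoot ζ q := Complex.isPrimitiveRoot_exp q hq0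
  -- step 1 : cyclotomic eval as product over coprime exponents
  have h0 : (Polynomial.cyclotomic q ℂ).eval 1 = ∏ μ ∈ primitiveRoots q ℂ, (1 - μ) := by
    rw [cyclotomic_eq_prod_X_sub_primitiveRoots hζ, eval_prod]
    simp
  have h1 : ∏ a ∈ (Icc 1 (q-1)).filter (fun j => Nat.gcd j q = 1), (1 - ζ^a)
      = ∏ μ ∈ primitiveRoots q ℂ, (1 - μ) := by
    apply Finset.prod_bij (fun a _ => ζ ^ a)
    · intro a ha
      simp only [mem_filter, mem_Icc] at ha
      rw [mem_primitiveRoots (by omega : 0 < q)]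
      exact hζ.pow_of_coprime a ha.2
    · intro a ha b hb hab
      simp only [mem_filter, mem_Icc] at ha hb
      exact hζ.pow_inj (by omega) (by omega) hab
    · intro μ hμ
      rw [mem_primitiveRoots (by omega : 0 < q)] at hμ
      obtain ⟨i, hik, rfl⟩ := hζ.eq_pow_of_pow_eq_one hμ.pow_eq_one
      have hcop : Nat.gcd i q = 1 := (hζ.pow_iff_coprime (by omega) i).mp hμ
      have hi1 : 1 ≤ i := by
        rcases Nat.eq_zero_or_pos i with rfl | h
        · rw [Nat.gcd_zero_left] at hcop; omega
        · exact h
      exact ⟨i, by simp only [mem_filter, mem_Icc]; exact ⟨⟨hi1, by omega⟩, hcop⟩, rfl⟩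
    · intro a ha; rfl
  -- step 2 : pair up
  have h2 : ∏ a ∈ (Icc 1 (q-1)).filter (fun j => Nat.gcd j q = 1), (1 - ζ^a)
      = ∏ a ∈ (Icc 1 ((q-1)/2)).filter (fun j => Nat.gcd j q = 1),
          ((1 - ζ^a) * (1 - ζ^(q-a))) :=
    pair_prod q hq _
  -- step 3 : each pair is a real sine square
  have h3 : ∀ a ∈ (Icc 1 ((q-1)/2)).filter (fun j => Nat.gcd j q = 1),
      (1 - ζ^a) * (1 - ζ^(q-a)) = (((2 * Real.sin (Real.pi * a / q))^2 : ℝ) : ℂ) := by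
    intro a ha
    simp only [mem_filter, mem_Icc] at ha
    obtain ⟨⟨ha1, ha2⟩, hag⟩ := ha
    set θ : ℝ := 2 * Real.pi * a / q with hθ
    have hζa : ζ^a = Complex.cos θ + Complex.sin θ * Complex.I := by
      rw [hζdef, ← Complex.exp_nat_mul, ← Complex.exp_mul_I]
      congr 1
      rw [hθ]
      push_cast
      ring
    have hζqa : ζ^(q-a) = Complex.cos θ - Complex.sin θ * Complex.I := by
      have hmul : ζ^(q-a) * ζ^a = 1 := by
        rw [← pow_add, Nat.sub_add_cancel (by omega : a ≤ q)]
        exact hζ.pow_eq_one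
      have hζane : (ζ:ℂ)^a ≠ 0 := by
        intro h; rw [h, mul_zero] at hmul; exact one_ne_zero hmul.symm
      have : ζ^(q-a) = (ζ^a)⁻¹ := by
        field_simp at hmul ⊢
        linear_combination hmul
      rw [this, hζa, ← Complex.exp_mul_I, ← Complex.exp_neg]
      rw [show -(((θ:ℝ):ℂ) * Complex.I) = (-((θ:ℝ):ℂ)) * Complex.I by ring,
        Complex.exp_mul_I, Complex.cos_neg, Complex.sin_neg]
      ring
    rw [hζa, hζqa]
    have hcums : (1 - (Complex.cos θ + Complex.sin θ * Complex.I)) *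
        (1 - (Complex.cos θ - Complex.sin θ * Complex.I)) = 2 - 2 * Complex.cos θ := by
      have hsc := Complex.sin_sq_add_cos_sq ((θ:ℝ):ℂ)
      linear_combination hsc - (Complex.sin ((θ:ℝ):ℂ))^2 * Complex.I_sq
    have hreal : (2:ℝ) - 2 * Real.cos θ = (2 * Real.sin (Real.pi * a / q))^2 := by
      have hx : θ = 2 * (Real.pi * a / q) := by rw [hθ]; ring
      have h2m := Real.cos_two_mul (Real.pi * a / q)
      have hsq := Real.sin_sq_add_cos_sq (Real.pi * a / q)
      rw [hx, h2m]
      nlinarith [hsq]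
    rw [hcums, ← Complex.ofReal_cos, ← hreal]
    push_cast
    ring
  rw [prod_congr rfl h3] at h2
  -- step 4 : integrality
  have h4 : (((Polynomial.cyclotomic q ℤ).eval 1 : ℤ) : ℂ) = (Polynomial.cyclotomic q ℂ).eval 1 := by
    rw [← map_cyclotomic q (Int.castRingHom ℂ), Polynomial.eval_map, Polynomial.eval₂_at_one]
    simp
  have h5 : ((∏ a ∈ (Icc 1 ((q-1)/2)).filter (fun j => Nat.gcd j q = 1),
      (2 * Real.sin (Real.pi * a / q))^2 : ℝ) : ℂ)
      = (((Polynomial.cyclotomic q ℤ).eval 1 : ℤ) : ℂ) := by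
    rw [h4, h0, ← h1, h2, Complex.ofReal_prod]
  have h6 : ∏ a ∈ (Icc 1 ((q-1)/2)).filter (fun j => Nat.gcd j q = 1),
      (2 * Real.sin (Real.pi * a / q))^2 = (((Polynomial.cyclotomic q ℤ).eval 1 : ℤ) : ℝ) := by
    exact_mod_cast h5
  rw [Finset.prod_pow] at h6
  set X : ℝ := ∏ a ∈ (Icc 1 ((q-1)/2)).filter (fun j => Nat.gcd j q = 1),
      (2 * Real.sin (Real.pi * a / q)) with hX
  have hpos : 0 < X := by
    rw [hX]
    apply Finset.prod_pos
    intro a ha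
    simp only [mem_filter, mem_Icc] at ha
    have := sin_pos_of_S1 q a hq ha.1.1 ha.1.2
    linarith
  have hXs : X = Real.sqrt (X^2) := (Real.sqrt_sq hpos.le).symm
  by_cases hpp : IsPrimePow q
  · obtain ⟨p, k, hp, hk, rfl⟩ := (isPrimePow_nat_iff _).1 hpp
    haveI : Fact p.Prime := ⟨hp⟩
    obtain ⟨j, rfl⟩ : ∃ j, k = j + 1 := ⟨k - 1, by omega⟩
    rw [Polynomial.eval_one_cyclotomic_prime_pow] at h6
    have heps : eps (p^(j+1)) = Real.sqrt p := by
      unfold eps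
      rw [if_pos hpp, hp.pow_minFac (by omega)]
    rw [heps, hXs, h6]
    norm_num
  · rw [Polynomial.eval_one_cyclotomic_not_prime_pow ?hnp] at h6
    case hnp =>
      intro p hp k hpk
      rcases Nat.eq_zero_or_pos k with rfl | hk
      · simp at hpk; omega
      · exact hpp ((isPrimePow_nat_iff _).2 ⟨p, k, hp, hk, hpk⟩)
    unfold eps
    rw [if_neg hpp, hXs, h6]
    norm_num

end cyc

noncomputable section char
open Filter Finset

def fchi (q : ℕ) (χ : DirichletCharacter ℂ q) (k : ℕ) : ℂ := 1 - χ (k : ZMod q) / (k : ℂ)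

def TT (q : ℕ) (χ : DirichletCharacter ℂ q) (a N : ℕ) : ℂ :=
  ∏ m ∈ range N, fchi q χ (q*m + a)

lemma regroup (q : ℕ) (χ : DirichletCharacter ℂ q) (N : ℕ) :
    ∏ k ∈ Icc 2 (q*N+1), fchi q χ k = ∏ a ∈ Icc 2 (q+1), TT q χ a N := by
  induction N with
  | zero => simp [TT]
  | succ N ih =>
      have h1 : Icc 2 (q*N+1) = Ioc 1 (q*N+1) := by rw [← Finset.Icc_add_one_left_eq_Ioc]; rfl
      have h2 : Icc 2 (q*(N+1)+1) = Ioc 1 (q*(N+1)+1) := by rw [← Finset.Icc_add_one_left_eq_Ioc]; rfl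
      have hmul : q*N ≤ q*(N+1) := Nat.mul_le_mul_left q (Nat.le_succ N)
      rw [h2, ← Finset.prod_Ioc_consecutive (fchi q χ)
        (by omega : 1 ≤ q*N+1) (by omega : q*N+1 ≤ q*(N+1)+1), ← h1, ih]
      have h3 : Ioc (q*N+1) (q*(N+1)+1) = Icc (q*N+2) (q*N+(q+1)) := by
        rw [← Finset.Icc_add_one_left_eq_Ioc, show q*(N+1)+1 = q*N+(q+1) from by ring]; rfl
      have h4 : Icc (q*N+2) (q*N+(q+1)) = Finset.map (addLeftEmbedding (q*N)) (Icc 2 (q+1)) := by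
        rw [Finset.map_add_left_Icc]
      rw [h3, h4, Finset.prod_map]
      have h5 : ∀ a ∈ Icc 2 (q+1), TT q χ a (N+1) = TT q χ a N * fchi q χ (q*N + a) := by
        intro a _
        rw [TT, prod_range_succ]
        rfl
      rw [prod_congr rfl h5, prod_mul_distrib]
      rfl

lemma TT_one_of_not_coprime (q : ℕ) (hq : 1 < q) (χ : DirichletCharacter ℂ q) (a N : ℕ)
    (h : Nat.gcd a q ≠ 1) : TT q χ a N = 1 := by
  haveI : NeZero q := ⟨by omega⟩
  rw [TT]
  apply prod_eq_one
  intro m _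
  have hcast : ((q*m + a : ℕ) : ZMod q) = (a : ZMod q) := by
    push_cast
    simp [ZMod.natCast_self]
  have hunit : ¬ IsUnit ((q*m + a : ℕ) : ZMod q) := by
    rw [hcast, ZMod.isUnit_iff_coprime]
    exact h
  rw [fchi, MulChar.map_nonunit χ hunit]
  simp

end char

noncomputable section char2
open Filter Finset

lemma cast_q_sub (q a : ℕ) (ha : a ≤ q) : ((q - a : ℕ) : ZMod q) = -(a : ZMod q) := by
  have : ((q - a : ℕ) : ZMod q) + (a : ZMod q) = ((q - a + a : ℕ) : ZMod q) := by push_cast; ring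
  rw [Nat.sub_add_cancel ha] at this
  have hq : ((q : ℕ) : ZMod q) = 0 := ZMod.natCast_self q
  rw [hq] at this
  linear_combination this

lemma TT_pair_tendsto (q : ℕ) (hq3 : 3 ≤ q) (χ : DirichletCharacter ℂ q)
    (hodd : χ.Odd) (a : ℕ) (ha1 : 2 ≤ a) (ha2 : a ≤ (q-1)/2) :
    Tendsto (fun N => TT q χ a N * TT q χ (q-a) N) atTop
      (nhds (Complex.sin ((Real.pi : ℂ) * (((a:ℂ) - χ (a : ZMod q))/(q:ℂ)))
        / ((Real.sin (Real.pi * ((a:ℝ)/(q:ℝ))) : ℝ) : ℂ))) := by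
  have hqR : ((q:ℝ)) ≠ 0 := by positivity
  have hqC : ((q:ℂ)) ≠ 0 := by exact_mod_cast (by positivity : ((q:ℝ)) ≠ 0)
  set b : ℂ := ((a:ℂ) - χ (a : ZMod q))/(q:ℂ) with hb
  set c : ℝ := (a:ℝ)/(q:ℝ) with hc
  have h0 : 0 < c := by
    rw [hc]
    have : (0:ℝ) < (a:ℝ) := by exact_mod_cast (by omega : 0 < a)
    positivity
  have h1 : c < 1 := by
    rw [hc, div_lt_one (by positivity)]
    exact_mod_cast (by omega : a < q)
  have key : ∀ N, TT q χ a N * TT q χ (q-a) N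
      = ∏ m ∈ range N, ((((m:ℂ)) + b) * ((m:ℂ) + 1 - b)) /
          ((((m:ℂ)) + (c:ℂ)) * ((m:ℂ) + 1 - (c:ℂ))) := by
    intro N
    rw [TT, TT, ← prod_mul_distrib]
    apply prod_congr rfl
    intro m _
    have hchi1 : χ (((q*m+a : ℕ) : ZMod q)) = χ (a : ZMod q) := by
      congr 1
      push_cast
      simp [ZMod.natCast_self]
    have hchi2 : χ (((q*m+(q-a) : ℕ) : ZMod q)) = - χ (a : ZMod q) := by
      have hc2 : ((q*m+(q-a) : ℕ) : ZMod q) = -(a : ZMod q) := by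
        push_cast [cast_q_sub q a (by omega)]
        simp [ZMod.natCast_self]
      rw [hc2, show -(a : ZMod q) = (-1) * (a : ZMod q) by ring, map_mul, hodd]
      ring
    have hcast1 : ((q*m+a : ℕ) : ℂ) = (q:ℂ)*(m:ℂ)+(a:ℂ) := by push_cast; ring
    have hcast2 : ((q*m+(q-a) : ℕ) : ℂ) = (q:ℂ)*(m:ℂ)+(q:ℂ)-(a:ℂ) := by
      push_cast [Nat.cast_sub (by omega : a ≤ q)]
      ring
    have hne1 : (q:ℂ)*(m:ℂ)+(a:ℂ) ≠ 0 := by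
      rw [← hcast1]
      exact_mod_cast (by omega : q*m+a ≠ 0)
    have hne2 : (q:ℂ)*(m:ℂ)+(q:ℂ)-(a:ℂ) ≠ 0 := by
      rw [← hcast2]
      exact_mod_cast (by omega : q*m+(q-a) ≠ 0)
    have e1 : (m:ℂ) + (c:ℂ) = ((q:ℂ)*(m:ℂ)+(a:ℂ))/(q:ℂ) := by
      rw [hc]; push_cast; field_simp
    have e2 : (m:ℂ) + 1 - (c:ℂ) = ((q:ℂ)*(m:ℂ)+(q:ℂ)-(a:ℂ))/(q:ℂ) := by
      rw [hc]; push_cast; field_simp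
    have e3 : (m:ℂ) + b = ((q:ℂ)*(m:ℂ)+(a:ℂ)-χ (a : ZMod q))/(q:ℂ) := by
      rw [hb]; field_simp; ring
    have e4 : (m:ℂ) + 1 - b = (((q:ℂ)*(m:ℂ)+(q:ℂ)-(a:ℂ))+χ (a : ZMod q))/(q:ℂ) := by
      rw [hb]; field_simp; ring
    rw [fchi, fchi, hchi1, hchi2, hcast1, hcast2, e1, e2, e3, e4,
      one_sub_div hne1, neg_div, sub_neg_eq_add, one_add_div hne2,
      div_mul_div_comm, div_mul_div_comm, div_mul_div_comm,
      div_div_div_cancel_right₀ (mul_ne_zero hqC hqC)]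
  rw [tendsto_congr key]
  exact pair_lim b c h0 h1

lemma TT_special_tendsto (q : ℕ) (hq3 : 3 ≤ q) (χ : DirichletCharacter ℂ q)
    (hodd : χ.Odd) :
    Tendsto (fun N => TT q χ (q+1) N * TT q χ (q-1) N) atTop
      (nhds (((Real.pi * (1/(q:ℝ)) : ℝ) : ℂ) / ((Real.sin (Real.pi * (1/(q:ℝ))) : ℝ) : ℂ))) := by
  have hqR : ((q:ℝ)) ≠ 0 := by positivity
  set c : ℝ := 1/(q:ℝ) with hc
  have h0 : 0 < c := by rw [hc]; positivity
  have h1 : c < 1 := by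
    rw [hc, div_lt_one (by positivity)]
    exact_mod_cast (by omega : 1 < q)
  have key : ∀ N, TT q χ (q+1) N * TT q χ (q-1) N
      = ∏ m ∈ range N, (((m:ℂ) + 1) * ((m:ℂ) + 1)) /
          ((((m:ℂ)) + 1 + (c:ℂ)) * ((m:ℂ) + 1 - (c:ℂ))) := by
    intro N
    rw [TT, TT, ← prod_mul_distrib]
    apply prod_congr rfl
    intro m _
    have hchi1 : χ (((q*m+(q+1) : ℕ) : ZMod q)) = 1 := by
      have : ((q*m+(q+1) : ℕ) : ZMod q) = 1 := by push_cast; simp [ZMod.natCast_self]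
      rw [this, map_one]
    have hchi2 : χ (((q*m+(q-1) : ℕ) : ZMod q)) = -1 := by
      have hc2 : ((q*m+(q-1) : ℕ) : ZMod q) = -(1 : ZMod q) := by
        push_cast [cast_q_sub q 1 (by omega)]
        simp [ZMod.natCast_self]
      rw [hc2]
      exact hodd
    have hcast1 : ((q*m+(q+1) : ℕ) : ℂ) = (q:ℂ)*(m:ℂ)+(q:ℂ)+1 := by push_cast; ring
    have hcast2 : ((q*m+(q-1) : ℕ) : ℂ) = (q:ℂ)*(m:ℂ)+(q:ℂ)-1 := by
      push_cast [Nat.cast_sub (by omega : 1 ≤ q)]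
      ring
    have hne1 : (q:ℂ)*(m:ℂ)+(q:ℂ)+1 ≠ 0 := by
      rw [← hcast1]
      exact_mod_cast (by omega : q*m+(q+1) ≠ 0)
    have hne2 : (q:ℂ)*(m:ℂ)+(q:ℂ)-1 ≠ 0 := by
      rw [← hcast2]
      exact_mod_cast (by omega : q*m+(q-1) ≠ 0)
    have hqC : ((q:ℂ)) ≠ 0 := by exact_mod_cast hqR
    have e1 : (m:ℂ) + 1 + (c:ℂ) = ((q:ℂ)*(m:ℂ)+(q:ℂ)+1)/(q:ℂ) := by
      rw [hc]; push_cast; field_simp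
    have e2 : (m:ℂ) + 1 - (c:ℂ) = ((q:ℂ)*(m:ℂ)+(q:ℂ)-1)/(q:ℂ) := by
      rw [hc]; push_cast; field_simp
    have e3 : (m:ℂ) + 1 = ((q:ℂ)*(m:ℂ)+(q:ℂ))/(q:ℂ) := by
      field_simp
    rw [fchi, fchi, hchi1, hchi2, hcast1, hcast2,
      one_sub_div hne1, show -(1:ℂ) / ((q:ℂ)*(m:ℂ)+(q:ℂ)-1) = -(1 / ((q:ℂ)*(m:ℂ)+(q:ℂ)-1)) from by ring,
      sub_neg_eq_add, one_add_div hne2, e1, e2, e3,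
      div_mul_div_comm, div_mul_div_comm, div_mul_div_comm,
      div_div_div_cancel_right₀ (mul_ne_zero hqC hqC)]
    congr 1 <;> ring
  rw [tendsto_congr key]
  exact one_pair_lim c h0 h1

end char2

noncomputable section assemble
open Filter Finset

lemma main_subseq (q : ℕ) (hq3 : 3 ≤ q) (χ : DirichletCharacter ℂ q) (hodd : χ.Odd) :
    Tendsto (fun N => ∏ k ∈ Icc 2 (q*N+1), fchi q χ k) atTop
      (nhds ((((Real.pi * (1/(q:ℝ)) : ℝ) : ℂ) / ((Real.sin (Real.pi * (1/(q:ℝ))) : ℝ) : ℂ)) *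
        ∏ a ∈ (Icc 2 ((q-1)/2)).filter (fun j => Nat.gcd j q = 1),
          (Complex.sin ((Real.pi : ℂ) * (((a:ℂ) - χ (a : ZMod q))/(q:ℂ)))
            / ((Real.sin (Real.pi * ((a:ℝ)/(q:ℝ))) : ℝ) : ℂ)))) := by
  have hq1 : 1 < q := by omega
  -- rewrite the partial products into paired form
  have key : ∀ N, ∏ k ∈ Icc 2 (q*N+1), fchi q χ k
      = (TT q χ (q+1) N * TT q χ (q-1) N) *
        ∏ a ∈ (Icc 2 ((q-1)/2)).filter (fun j => Nat.gcd j q = 1),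
          (TT q χ a N * TT q χ (q-a) N) := by
    intro N
    rw [regroup q χ N]
    have h1 : ∏ a ∈ Icc 2 (q+1), TT q χ a N
        = ∏ a ∈ (Icc 2 (q+1)).filter (fun j => Nat.gcd j q = 1), TT q χ a N := by
      rw [Finset.prod_filter_of_ne]
      intro a ha hne
      by_contra h
      exact hne (TT_one_of_not_coprime q hq1 χ a N h)
    set u : ℕ → ℂ := fun a => if a = 1 then TT q χ (q+1) N else TT q χ a N with hu
    have h2 : (Icc 2 (q+1)).filter (fun j => Nat.gcd j q = 1)
        = insert (q+1) ((Icc 2 (q-1)).filter (fun j => Nat.gcd j q = 1)) := by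
      ext a
      simp only [mem_filter, mem_Icc, mem_insert]
      constructor
      · rintro ⟨⟨h1', h2'⟩, hg⟩
        rcases Nat.lt_or_ge a q with h | h
        · exact Or.inr ⟨⟨h1', by omega⟩, hg⟩
        · rcases Nat.eq_or_lt_of_le h with rfl | h'
          · rw [Nat.gcd_self] at hg; omega
          · left; omega
      · rintro (rfl | ⟨⟨h1', h2'⟩, hg⟩)
        · refine ⟨⟨by omega, le_refl _⟩, ?_⟩
          rw [show q+1 = 1+q from by omega, Nat.gcd_add_self_left, Nat.gcd_one_left]
        · exact ⟨⟨h1', by omega⟩, hg⟩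
    have h3 : (Icc 1 (q-1)).filter (fun j => Nat.gcd j q = 1)
        = insert 1 ((Icc 2 (q-1)).filter (fun j => Nat.gcd j q = 1)) := by
      ext a
      simp only [mem_filter, mem_Icc, mem_insert]
      constructor
      · rintro ⟨⟨h1', h2'⟩, hg⟩
        rcases Nat.eq_or_lt_of_le h1' with rfl | h'
        · left; rfl
        · right; exact ⟨⟨by omega, h2'⟩, hg⟩
      · rintro (rfl | ⟨⟨h1', h2'⟩, hg⟩)
        · exact ⟨⟨le_refl _, by omega⟩, Nat.gcd_one_left q⟩
        · exact ⟨⟨by omega, h2'⟩, hg⟩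
    have hnotmem1 : (q+1) ∉ (Icc 2 (q-1)).filter (fun j => Nat.gcd j q = 1) := by
      simp only [mem_filter, mem_Icc]
      omega
    have hnotmem2 : (1:ℕ) ∉ (Icc 2 (q-1)).filter (fun j => Nat.gcd j q = 1) := by
      simp only [mem_filter, mem_Icc]
      omega
    have h4 : ∏ a ∈ (Icc 2 (q+1)).filter (fun j => Nat.gcd j q = 1), TT q χ a N
        = ∏ a ∈ (Icc 1 (q-1)).filter (fun j => Nat.gcd j q = 1), u a := by
      rw [h2, h3, prod_insert hnotmem1, prod_insert hnotmem2]
      have hu1 : u 1 = TT q χ (q+1) N := by rw [hu]; simp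
      rw [hu1]
      congr 1
      apply prod_congr rfl
      intro a ha
      simp only [mem_filter, mem_Icc] at ha
      rw [hu]
      simp only [if_neg (by omega : ¬ a = 1)]
    have h3' : (Icc 1 ((q-1)/2)).filter (fun j => Nat.gcd j q = 1)
        = insert 1 ((Icc 2 ((q-1)/2)).filter (fun j => Nat.gcd j q = 1)) := by
      ext a
      simp only [mem_filter, mem_Icc, mem_insert]
      constructor
      · rintro ⟨⟨h1', h2'⟩, hg⟩
        rcases Nat.eq_or_lt_of_le h1' with rfl | h'
        · left; rfl
        · right; exact ⟨⟨by omega, h2'⟩, hg⟩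
      · rintro (rfl | ⟨⟨h1', h2'⟩, hg⟩)
        · exact ⟨⟨le_refl _, by omega⟩, Nat.gcd_one_left q⟩
        · exact ⟨⟨by omega, h2'⟩, hg⟩
    have hnotmem2' : (1:ℕ) ∉ (Icc 2 ((q-1)/2)).filter (fun j => Nat.gcd j q = 1) := by
      simp only [mem_filter, mem_Icc]
      omega
    rw [h1, h4, pair_prod q hq3 u, h3', prod_insert hnotmem2']
    have hu1 : u 1 * u (q - 1) = TT q χ (q+1) N * TT q χ (q-1) N := by
      rw [hu]
      simp only [if_neg (by omega : ¬ q - 1 = 1)]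
      simp
    rw [hu1]
    congr 1
    apply prod_congr rfl
    intro a ha
    simp only [mem_filter, mem_Icc] at ha
    rw [hu]
    simp only [if_neg (by omega : ¬ a = 1), if_neg (by omega : ¬ q - a = 1)]
  rw [tendsto_congr key]
  apply Tendsto.mul (TT_special_tendsto q hq3 χ hodd)
  apply tendsto_finset_prod
  intro a ha
  simp only [mem_filter, mem_Icc] at ha
  exact TT_pair_tendsto q hq3 χ hodd a ha.1.1 ha.1.2

end assemble

noncomputable section fulllim
open Filter Finset

lemma full_tendsto (q : ℕ) (hq3 : 3 ≤ q) (χ : DirichletCharacter ℂ q) (L : ℂ)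
    (h : Tendsto (fun N => ∏ k ∈ Icc 2 (q*N+1), fchi q χ k) atTop (nhds L)) :
    Tendsto (fun n => ∏ k ∈ Icc 2 n, fchi q χ k) atTop (nhds L) := by
  have hq0 : 0 < q := by omega
  set m0 : ℕ → ℕ := fun n => q*((n-1)/q)+1 with hm0
  have hm0ge1 : ∀ n, 1 ≤ m0 n := by
    intro n
    simp only [hm0]
    omega
  have hm0_le : ∀ n, 1 ≤ n → m0 n ≤ n := by
    intro n hn
    have h1 := Nat.div_mul_le_self (n-1) q
    have h2 : q * ((n-1)/q) ≤ n - 1 := by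
      rw [mul_comm]; exact h1
    simp only [hm0]
    omega
  have hm0_ge : ∀ n, n ≤ m0 n + q := by
    intro n
    rcases Nat.eq_zero_or_pos n with rfl | hn
    · have := hm0ge1 0
      omega
    · have hmod := Nat.div_add_mod (n-1) q
      have hlt := Nat.mod_lt (n-1) hq0
      simp only [hm0]
      omega
  have hdiv : Tendsto (fun n : ℕ => (n-1)/q) atTop atTop := by
    rw [tendsto_atTop_atTop]
    intro b
    refine ⟨q*b+1, fun n hn => ?_⟩
    rw [Nat.le_div_iff_mul_le hq0]
    have : b * q = q * b := mul_comm b q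
    omega
  have hm0_tendsto : Tendsto m0 atTop atTop := by
    apply tendsto_atTop_mono ?_ hdiv
    intro n
    have : (n-1)/q ≤ q * ((n-1)/q) := Nat.le_mul_of_pos_left _ hq0
    simp only [hm0]
    omega
  have hP1 : Tendsto (fun n => ∏ k ∈ Icc 2 (m0 n), fchi q χ k) atTop (nhds L) := h.comp hdiv
  -- tail factors
  have hfac : ∀ j : ℕ, Tendsto
      (fun n => if m0 n + j ≤ n then fchi q χ (m0 n + j) else 1) atTop (nhds (1:ℂ)) := by
    intro j
    rw [tendsto_iff_norm_sub_tendsto_zero]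
    apply squeeze_zero (fun n => norm_nonneg _) (g := fun n => ((m0 n : ℝ))⁻¹)
    · intro n
      by_cases hcase : m0 n + j ≤ n
      · rw [if_pos hcase]
        have hk : 0 < m0 n + j := by have := hm0ge1 n; omega
        have hfk : fchi q χ (m0 n + j) - 1 = -(χ ((m0 n + j : ℕ) : ZMod q) / ((m0 n + j : ℕ) : ℂ)) := by
          rw [fchi]; ring
        rw [hfk, norm_neg, norm_div, Complex.norm_natCast]
        have h1 : ‖χ ((m0 n + j : ℕ) : ZMod q)‖ ≤ 1 := DirichletCharacter.norm_le_one χ _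
        have h2 : (0:ℝ) < (m0 n : ℝ) := by exact_mod_cast hm0ge1 n
        have h4 : (m0 n : ℝ) ≤ ((m0 n + j : ℕ) : ℝ) := by exact_mod_cast (by omega : m0 n ≤ m0 n + j)
        rw [← one_div]
        calc ‖χ ((m0 n + j : ℕ) : ZMod q)‖ / ((m0 n + j : ℕ) : ℝ)
            ≤ 1 / (m0 n : ℝ) := by gcongr
          _ = 1 / (m0 n : ℝ) := rfl
      · rw [if_neg hcase]
        simp only [sub_self, norm_zero]
        positivity
    · apply tendsto_inv_atTop_zero.comp
      exact tendsto_natCast_atTop_atTop.comp hm0_tendsto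
  have htail : Tendsto (fun n => ∏ j ∈ Icc 1 q,
      (if m0 n + j ≤ n then fchi q χ (m0 n + j) else 1)) atTop (nhds 1) := by
    have := tendsto_finset_prod (Icc 1 q)
      (fun j (_ : j ∈ Icc 1 q) => hfac j)
    simpa using this
  have hsplit : ∀ᶠ n in atTop, (∏ k ∈ Icc 2 (m0 n), fchi q χ k) *
      (∏ j ∈ Icc 1 q, (if m0 n + j ≤ n then fchi q χ (m0 n + j) else 1))
      = ∏ k ∈ Icc 2 n, fchi q χ k := by
    filter_upwards [eventually_ge_atTop 1] with n hn
    have hm0n := hm0_le n hn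
    have hmq := hm0_ge n
    -- tail as product over Ioc
    have htail_eq : ∏ j ∈ Icc 1 q, (if m0 n + j ≤ n then fchi q χ (m0 n + j) else 1)
        = ∏ k ∈ Ioc (m0 n) n, fchi q χ k := by
      rw [← Finset.prod_filter]
      have hfilter : (Icc 1 q).filter (fun j => m0 n + j ≤ n) = Icc 1 (n - m0 n) := by
        ext j
        simp only [mem_filter, mem_Icc]
        omega
      rw [hfilter]
      have hmap : Ioc (m0 n) n = Finset.map (addLeftEmbedding (m0 n)) (Icc 1 (n - m0 n)) := by
        rw [Finset.map_add_left_Icc, ← Finset.Icc_add_one_left_eq_Ioc]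
        congr 1
        omega
      rw [hmap, Finset.prod_map]
      rfl
    rw [htail_eq, show Icc 2 (m0 n) = Ioc 1 (m0 n) from (Finset.Icc_add_one_left_eq_Ioc 1 (m0 n)).symm ▸ rfl,
      show Icc 2 n = Ioc 1 n from (Finset.Icc_add_one_left_eq_Ioc 1 n).symm ▸ rfl]
    exact Finset.prod_Ioc_consecutive _ (by have := hm0ge1 n; omega) hm0n
  have hfinal := hP1.mul htail
  rw [mul_one] at hfinal
  exact hfinal.congr' hsplit

end fulllim

noncomputable section finalsec
open Filter Finset

lemma value_eq (q : ℕ) (hq3 : 3 ≤ q) (χ : DirichletCharacter ℂ q) :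
    (((Real.pi * (1/(q:ℝ)) : ℝ) : ℂ) / ((Real.sin (Real.pi * (1/(q:ℝ))) : ℝ) : ℂ)) *
      ∏ a ∈ (Icc 2 ((q-1)/2)).filter (fun j => Nat.gcd j q = 1),
        (Complex.sin ((Real.pi : ℂ) * (((a:ℂ) - χ (a : ZMod q))/(q:ℂ)))
          / ((Real.sin (Real.pi * ((a:ℝ)/(q:ℝ))) : ℝ) : ℂ))
    = (Real.pi : ℂ) * (((2 : ℝ) ^ ((q.totient : ℝ) / 2) : ℝ) : ℂ) / ((q : ℂ) * (eps q : ℂ)) *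
      ∏ a ∈ (Icc 2 ((q-1)/2)).filter (fun j => Nat.gcd j q = 1),
        Complex.sin ((Real.pi : ℂ) * (((a:ℂ) - χ (a : ZMod q))/(q:ℂ))) := by
  have hqR : (0:ℝ) < (q:ℝ) := by positivity
  set S₂ := (Icc 2 ((q-1)/2)).filter (fun j => Nat.gcd j q = 1) with hS₂
  set S₁ := (Icc 1 ((q-1)/2)).filter (fun j => Nat.gcd j q = 1) with hS₁
  have hS : S₁ = insert 1 S₂ := by
    rw [hS₁, hS₂]
    ext a
    simp only [mem_filter, mem_Icc, mem_insert]
    constructor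
    · rintro ⟨⟨h1', h2'⟩, hg⟩
      rcases Nat.eq_or_lt_of_le h1' with rfl | h'
      · left; rfl
      · right; exact ⟨⟨by omega, h2'⟩, hg⟩
    · rintro (rfl | ⟨⟨h1', h2'⟩, hg⟩)
      · exact ⟨⟨le_refl _, by omega⟩, Nat.gcd_one_left q⟩
      · exact ⟨⟨by omega, h2'⟩, hg⟩
  have h1mem : (1:ℕ) ∉ S₂ := by
    rw [hS₂]; simp only [mem_filter, mem_Icc]; omega
  set Y : ℝ := ∏ a ∈ S₂, Real.sin (Real.pi * a / q) with hY
  set s : ℝ := Real.sin (Real.pi * (1/(q:ℝ))) with hs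
  have hs_pos : 0 < s := by
    rw [hs]
    apply Real.sin_pos_of_pos_of_lt_pi
    · positivity
    · rw [mul_comm]
      have : 1/(q:ℝ) < 1 := by
        rw [div_lt_one hqR]; exact_mod_cast (by omega : 1 < q)
      nlinarith [Real.pi_pos]
  have hY_pos : 0 < Y := by
    rw [hY]
    apply Finset.prod_pos
    intro a ha
    rw [hS₂] at ha
    simp only [mem_filter, mem_Icc] at ha
    exact sin_pos_of_S1 q a hq3 (by omega) ha.1.2
  have hcard := totient_eq_twice_card q hq3
  have hpow : (2:ℝ) ^ ((q.totient : ℝ) / 2) = (2:ℝ) ^ (S₁.card) := by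
    rw [hcard]
    have : ((2 * S₁.card : ℕ) : ℝ)/2 = ((S₁.card : ℕ) : ℝ) := by push_cast; ring
    rw [this, Real.rpow_natCast]
  have heps : eps q = (2:ℝ)^(S₁.card) * (s * Y) := by
    rw [← prod_two_sin_eq_eps q hq3, ← hS₁, Finset.prod_mul_distrib, Finset.prod_const, hS,
      Finset.prod_insert h1mem, ← hY]
    have : Real.sin (Real.pi * (1:ℕ) / q) = s := by
      rw [hs]; congr 1; push_cast; ring
    rw [this]
  -- pass to ℂ
  have hprodY : ∏ a ∈ S₂, ((Real.sin (Real.pi * ((a:ℝ)/(q:ℝ))) : ℝ) : ℂ) = ((Y:ℝ) : ℂ) := by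
    rw [hY, Complex.ofReal_prod]
    apply Finset.prod_congr rfl
    intro a _
    congr 1
    rw [mul_div_assoc]
  rw [prod_div_distrib, hprodY]
  have hsC : ((s:ℝ):ℂ) ≠ 0 := by exact_mod_cast hs_pos.ne'
  have hYC : ((Y:ℝ):ℂ) ≠ 0 := by exact_mod_cast hY_pos.ne'
  have hqC : ((q:ℂ)) ≠ 0 := by exact_mod_cast hqR.ne'
  have h2C : (((2:ℝ)^(S₁.card) : ℝ) : ℂ) ≠ 0 := by
    have : (0:ℝ) < (2:ℝ)^(S₁.card) := by positivity
    exact_mod_cast this.ne'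
  rw [hpow, show ((eps q : ℝ) : ℂ) = (((2:ℝ)^(S₁.card) : ℝ) : ℂ) * (((s:ℝ):ℂ) * ((Y:ℝ):ℂ)) from by
    rw [heps]; push_cast; ring]
  push_cast
  field_simp

end finalsec


/-- Corollary 1, second identity: for an odd primitive Dirichlet character `χ`
of conductor `q > 1`, `∏_{k≥2} (1 - χ(k)/k)` converges to
`π 2^{φ(q)/2} / (q ε(q)) · ∏_{2 ≤ j ≤ ⌊(q-1)/2⌋, (j,q)=1} sin(π (j - χ(j))/q)`. -/
theorem infinite_product_odd_dirichlet_char_at_one (q : ℕ) (hq : 1 < q)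
    (χ : DirichletCharacter ℂ q) (hprim : χ.IsPrimitive) (hodd : χ.Odd) :
    Tendsto (fun N : ℕ => ∏ k ∈ Icc 2 N, (1 - χ (k : ZMod q) / (k : ℂ)))
      atTop
      (nhds ((Real.pi : ℂ) * (((2 : ℝ) ^ ((q.totient : ℝ) / 2) : ℝ) : ℂ) / ((q : ℂ) * (eps q : ℂ)) *
        ∏ j ∈ (Icc 2 ((q - 1) / 2)).filter fun j => Nat.gcd j q = 1,
          Complex.sin ((Real.pi : ℂ) * (((j : ℂ) - χ (j : ZMod q)) / (q : ℂ))))) := by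
  have hq3 : 3 ≤ q := by
    by_contra h
    have hq2 : q = 2 := by omega
    subst hq2
    have hne : (-1 : ZMod 2) = 1 := by decide
    rw [DirichletCharacter.Odd, hne, map_one] at hodd
    norm_num at hodd
  have hmain := full_tendsto q hq3 χ _ (main_subseq q hq3 χ hodd)
  rw [← value_eq q hq3 χ]
  exact hmain
end

section
/- Let n ≥ 1 be an integer, let a ∈ ℂ, let z_1, …, z_n be complex numbers none of which is a nonpositive integer, and let f : {1, …, n} → ℂ satisfy f(1) + ⋯ + f(n) = 0. Then the infinite product ∏_{k=0}^{∞} ∏_{j=1}^{n} (1 − f(j)·a/(z_j + k)) converges (as the limit of partial products over 0 ≤ k ≤ N) and equals ∏_{j=1}^{n} Γ(z_j)/Γ(z_j − f(j)·a), where Γ is the complex Gamma function and each quotient Γ(z_j)/Γ(z_j − f(j)a) is interpreted as Γ(z_j)·(1/Γ(z_j − f(j)a)) with 1/Γ the entire reciprocal Gamma function. -/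
open Filter Finset

lemma cpow_finset_sum {x : ℂ} (hx : x ≠ 0) (s : Finset ℕ) (g : ℕ → ℂ) :
    x ^ (∑ j ∈ s, g j) = ∏ j ∈ s, x ^ g j := by
  induction s using Finset.cons_induction with
  | empty => simp
  | cons j s hj ih => rw [Finset.sum_cons, Finset.prod_cons, Complex.cpow_add _ _ hx, ih]

/-- Lemma 1: if `f(1) + ⋯ + f(n) = 0` and no `z_j` is a nonpositive integer, then
`∏_{k≥0} ∏_{j=1}^n (1 - f(j) a/(z_j + k))` converges to `∏_{j=1}^n Γ(z_j)/Γ(z_j - f(j)a)`. -/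
theorem infinite_product_gamma_quotients (n : ℕ) (hn : 1 ≤ n) (a : ℂ) (z : ℕ → ℂ)
    (hz : ∀ j ∈ Icc 1 n, ∀ m : ℕ, z j ≠ -(m : ℂ))
    (f : ℕ → ℂ) (hf : ∑ j ∈ Icc 1 n, f j = 0) :
    Tendsto (fun N : ℕ => ∏ k ∈ range (N + 1), ∏ j ∈ Icc 1 n,
        (1 - f j * a / (z j + (k : ℂ))))
      atTop
      (nhds (∏ j ∈ Icc 1 n, Complex.Gamma (z j) * (Complex.Gamma (z j - f j * a))⁻¹)) := by
  have hzk : ∀ j ∈ Icc 1 n, ∀ k : ℕ, z j + (k : ℂ) ≠ 0 := by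
    intro j hj k h
    exact hz j hj k (by linear_combination h)
  by_cases hg : ∀ j ∈ Icc 1 n, ∀ m : ℕ, z j - f j * a ≠ -(m : ℂ)
  · -- main case: no `z j - f j * a` is a nonpositive integer
    have hgk : ∀ j ∈ Icc 1 n, ∀ k : ℕ, z j - f j * a + (k : ℂ) ≠ 0 := by
      intro j hj k h
      exact hg j hj k (by linear_combination h)
    have key : ∀ᶠ N : ℕ in atTop,
        (∏ k ∈ range (N + 1), ∏ j ∈ Icc 1 n, (1 - f j * a / (z j + (k : ℂ))))
        = ∏ j ∈ Icc 1 n,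
            Complex.GammaSeq (z j) N / Complex.GammaSeq (z j - f j * a) N := by
      filter_upwards [eventually_ge_atTop 1] with N hN
      have hNz : (N : ℂ) ≠ 0 := by
        exact_mod_cast Nat.cast_ne_zero.mpr (by omega)
      rw [Finset.prod_comm]
      have step : ∀ j ∈ Icc 1 n,
          (∏ k ∈ range (N + 1), (1 - f j * a / (z j + (k : ℂ))))
          = (N : ℂ) ^ (-(f j * a)) *
              (Complex.GammaSeq (z j) N / Complex.GammaSeq (z j - f j * a) N) := by
        intro j hj
        have h1 : ∀ k ∈ range (N + 1),
            (1 - f j * a / (z j + (k : ℂ))) = (z j - f j * a + k) / (z j + k) := by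
          intro k _
          field_simp [hzk j hj k]
          ring
        rw [Finset.prod_congr rfl h1, Finset.prod_div_distrib,
          Complex.GammaSeq, Complex.GammaSeq]
        have hp1 : (∏ k ∈ range (N + 1), (z j + (k : ℂ))) ≠ 0 :=
          Finset.prod_ne_zero_iff.mpr fun k _ => hzk j hj k
        have hp2 : (∏ k ∈ range (N + 1), (z j - f j * a + (k : ℂ))) ≠ 0 :=
          Finset.prod_ne_zero_iff.mpr fun k _ => hgk j hj k
        have hfac : (N : ℂ) ^ (z j) = (N : ℂ) ^ (z j - f j * a) * (N : ℂ) ^ (f j * a) := by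
          rw [← Complex.cpow_add _ _ hNz, sub_add_cancel]
        have hpow1 : (N : ℂ) ^ (f j * a) ≠ 0 := by
          simp [Complex.cpow_eq_zero_iff, hNz]
        have hpow2 : (N : ℂ) ^ (z j - f j * a) ≠ 0 := by
          simp [Complex.cpow_eq_zero_iff, hNz]
        have hNfac : ((N.factorial : ℂ)) ≠ 0 := by
          exact_mod_cast Nat.factorial_ne_zero N
        rw [Complex.cpow_neg, hfac]
        field_simp
      rw [Finset.prod_congr rfl step, Finset.prod_mul_distrib,
        ← cpow_finset_sum hNz]
      have : (∑ j ∈ Icc 1 n, -(f j * a)) = 0 := by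
        rw [Finset.sum_neg_distrib, ← Finset.sum_mul, hf, zero_mul, neg_zero]
      rw [this, Complex.cpow_zero, one_mul]
    have hlim : Tendsto (fun N : ℕ => ∏ j ∈ Icc 1 n,
        Complex.GammaSeq (z j) N / Complex.GammaSeq (z j - f j * a) N) atTop
        (nhds (∏ j ∈ Icc 1 n, Complex.Gamma (z j) * (Complex.Gamma (z j - f j * a))⁻¹)) := by
      refine tendsto_finset_prod _ fun j hj => ?_
      rw [← div_eq_mul_inv]
      exact (Complex.GammaSeq_tendsto_Gamma (z j)).div
        (Complex.GammaSeq_tendsto_Gamma (z j - f j * a))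
        (Complex.Gamma_ne_zero (hg j hj))
    exact hlim.congr' (key.mono fun N h => h.symm)
  · -- degenerate case: some `z j - f j * a` is a nonpositive integer; both sides are 0
    push_neg at hg
    obtain ⟨j0, hj0, m, hm⟩ := hg
    have hrhs : (∏ j ∈ Icc 1 n, Complex.Gamma (z j) * (Complex.Gamma (z j - f j * a))⁻¹) = 0 := by
      refine Finset.prod_eq_zero hj0 ?_
      rw [(Complex.Gamma_eq_zero_iff _).mpr ⟨m, hm⟩]
      simp
    rw [hrhs]
    have key : ∀ᶠ N : ℕ in atTop,
        (∏ k ∈ range (N + 1), ∏ j ∈ Icc 1 n, (1 - f j * a / (z j + (k : ℂ)))) = 0 := by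
      filter_upwards [eventually_ge_atTop m] with N hN
      refine Finset.prod_eq_zero (i := m) (Finset.mem_range.mpr (by omega)) ?_
      refine Finset.prod_eq_zero hj0 ?_
      have : z j0 + (m : ℂ) = f j0 * a := by linear_combination hm
      have hne : z j0 + (m : ℂ) ≠ 0 := hzk j0 hj0 m
      rw [this] at hne
      rw [this, div_self hne, sub_self]
    exact tendsto_const_nhds.congr' (key.mono fun N h => h.symm)
end

section
/- For every integer n ≥ 2, the product of Γ(j/n) over all integers j with 1 ≤ j ≤ n−1 and gcd(j,n) = 1 equals (2π)^{φ(n)/2} if n is not a prime power, and equals (1/√p)·(2π)^{φ(n)/2} if n = p^ν for a prime p and an integer ν ≥ 1. -/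
open Finset Polynomial

private lemma abs_one_sub_exp (θ : ℝ) (h0 : 0 ≤ θ) (h1 : θ ≤ 2 * Real.pi) :
    ‖1 - Complex.exp (θ * Complex.I)‖ = 2 * Real.sin (θ / 2) := by
  have hre : (1 - Complex.exp (θ * Complex.I)).re = 1 - Real.cos θ := by
    simp [Complex.exp_ofReal_mul_I_re]
  have him : (1 - Complex.exp (θ * Complex.I)).im = - Real.sin θ := by
    simp [Complex.exp_ofReal_mul_I_im]
  have hs : 0 ≤ Real.sin (θ / 2) :=
    Real.sin_nonneg_of_nonneg_of_le_pi (by linarith) (by linarith)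
  rw [Complex.norm_def, Complex.normSq_apply, hre, him]
  have hc : Real.cos θ = 1 - 2 * Real.sin (θ / 2) ^ 2 := by
    have h2 := Real.cos_two_mul (θ / 2)
    rw [show 2 * (θ / 2) = θ by ring] at h2
    nlinarith [Real.sin_sq_add_cos_sq (θ / 2)]
  have key : (1 - Real.cos θ) * (1 - Real.cos θ) + (-Real.sin θ) * (-Real.sin θ)
      = (2 * Real.sin (θ / 2)) ^ 2 := by nlinarith [Real.sin_sq_add_cos_sq θ]
  rw [key, Real.sqrt_sq (by linarith)]

private lemma prod_two_sin (n : ℕ) (hn : 2 ≤ n) :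
    ∏ j ∈ (range n).filter (fun j => Nat.gcd j n = 1), (2 * Real.sin (Real.pi * j / n))
      = (((Polynomial.cyclotomic n ℤ).eval 1 : ℤ) : ℝ) := by
  have hn0 : n ≠ 0 := by omega
  haveI : NeZero n := ⟨hn0⟩
  have hnR : (0 : ℝ) < n := by positivity
  set μ : ℂ := Complex.exp (2 * Real.pi * Complex.I / n) with hμdef
  have hμ : IsPrimitiveRoot μ n := Complex.isPrimitiveRoot_exp n hn0
  have hcyc : (((cyclotomic n ℤ).eval 1 : ℤ) : ℂ)
      = ∏ j ∈ (range n).filter (fun j => Nat.gcd j n = 1), (1 - μ ^ j) := by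
    have h1 : (cyclotomic n ℂ).eval 1 = ∏ ζ ∈ primitiveRoots n ℂ, (1 - ζ) := by
      rw [cyclotomic_eq_prod_X_sub_primitiveRoots hμ]
      simp [eval_prod]
    have h2 : (((cyclotomic n ℤ).eval 1 : ℤ) : ℂ) = (cyclotomic n ℂ).eval 1 := by
      rw [← map_cyclotomic_int n ℂ, eval_one_map]
      simp
    rw [h2, h1]
    refine (Finset.prod_bij (fun j _ => μ ^ j) ?_ ?_ ?_ ?_).symm
    · intro j hj
      simp only [mem_filter, mem_range] at hj
      exact (mem_primitiveRoots (by omega)).mpr (hμ.pow_of_coprime j hj.2)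
    · intro a ha b hb hab
      simp only [mem_filter, mem_range] at ha hb
      exact hμ.pow_inj ha.1 hb.1 hab
    · intro ζ hζ
      rw [mem_primitiveRoots (by omega : 0 < n)] at hζ
      rw [hμ.isPrimitiveRoot_iff] at hζ
      obtain ⟨i, hin, hicop, rfl⟩ := hζ
      exact ⟨i, by simp only [mem_filter, mem_range]; exact ⟨hin, hicop⟩, rfl⟩
    · intros; rfl
  have habs := congrArg norm hcyc
  rw [norm_prod] at habs
  have hval : ∀ j ∈ (range n).filter (fun j => Nat.gcd j n = 1),
      ‖1 - μ ^ j‖ = 2 * Real.sin (Real.pi * j / n) := by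
    intro j hj
    simp only [mem_filter, mem_range] at hj
    have hpow : μ ^ j = Complex.exp (((2 * Real.pi * j / n : ℝ) : ℂ) * Complex.I) := by
      rw [hμdef, ← Complex.exp_nat_mul]
      congr 1
      push_cast
      ring
    rw [hpow, abs_one_sub_exp]
    · congr 1
      ring_nf
    · positivity
    · rw [div_le_iff₀ hnR]
      have : (j : ℝ) ≤ n := by exact_mod_cast hj.1.le
      nlinarith [Real.pi_pos]
  rw [Finset.prod_congr rfl hval] at habs
  rw [← habs]
  rw [Complex.norm_intCast]
  rw [abs_of_nonneg]
  exact_mod_cast cyclotomic_nonneg n (le_refl (1:ℤ))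

/-- Lemma 2 (Chamberland–Straub): for `n ≥ 2`,
`∏_{1 ≤ j ≤ n-1, (j,n)=1} Γ(j/n)` equals `(2π)^{φ(n)/2}` if `n` is not a prime power,
and `(1/√p)(2π)^{φ(n)/2}` if `n = p^ν` with `p` prime and `ν ≥ 1`. -/
theorem gamma_product_coprime (n : ℕ) (hn : 2 ≤ n) :
    (¬ IsPrimePow n →
      ∏ j ∈ (Icc 1 (n - 1)).filter (fun j => Nat.gcd j n = 1),
          Real.Gamma ((j : ℝ) / (n : ℝ))
        = (2 * Real.pi) ^ ((n.totient : ℝ) / 2)) ∧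
    (∀ p ν : ℕ, p.Prime → 1 ≤ ν → n = p ^ ν →
      ∏ j ∈ (Icc 1 (n - 1)).filter (fun j => Nat.gcd j n = 1),
          Real.Gamma ((j : ℝ) / (n : ℝ))
        = (1 / Real.sqrt p) * (2 * Real.pi) ^ ((n.totient : ℝ) / 2)) := by
  have hπ := Real.pi_pos
  have hn0 : n ≠ 0 := by omega
  have hnR : (0 : ℝ) < n := by positivity
  set T := (range n).filter (fun j => Nat.gcd j n = 1) with hTdef
  have hS : (Icc 1 (n - 1)).filter (fun j => Nat.gcd j n = 1) = T := by
    ext j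
    simp only [hTdef, mem_filter, mem_Icc, mem_range]
    constructor
    · rintro ⟨⟨h1, h2⟩, h3⟩; exact ⟨by omega, h3⟩
    · rintro ⟨h1, h3⟩
      refine ⟨⟨?_, by omega⟩, h3⟩
      rcases Nat.eq_zero_or_pos j with rfl | h
      · rw [Nat.gcd_zero_left] at h3; omega
      · exact h
  have hcard : T.card = n.totient := by
    rw [hTdef, Nat.totient]
    congr 1
    ext j
    simp [Nat.Coprime, Nat.gcd_comm]
  have hmem : ∀ j ∈ T, 1 ≤ j ∧ j < n := by
    intro j hj
    simp only [hTdef, mem_filter, mem_range] at hj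
    refine ⟨?_, hj.1⟩
    rcases Nat.eq_zero_or_pos j with rfl | h
    · rw [Nat.gcd_zero_left] at hj; omega
    · exact h
  set P := ∏ j ∈ T, Real.Gamma ((j : ℝ) / n) with hPdef
  have hPpos : 0 < P := by
    refine Finset.prod_pos fun j hj => Real.Gamma_pos_of_pos ?_
    have := (hmem j hj).1
    have : (1 : ℝ) ≤ (j : ℝ) := by exact_mod_cast this
    positivity
  -- the reflected product
  have hinv : ∏ j ∈ T, Real.Gamma (((n - j : ℕ) : ℝ) / n) = P := by
    refine Finset.prod_nbij' (fun j => n - j) (fun j => n - j) ?_ ?_ ?_ ?_ ?_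
    · intro a ha
      have h1 := hmem a ha
      simp only [hTdef, mem_filter, mem_range] at ha ⊢
      constructor
      · omega
      · have : n = a + (n - a) := by omega
        calc Nat.gcd (n - a) n = Nat.gcd (n - a) (a + (n - a)) := by rw [← this]
          _ = Nat.gcd (n - a) a := Nat.gcd_add_self_right _ _
          _ = Nat.gcd n a := Nat.gcd_sub_self_left h1.2.le
          _ = Nat.gcd a n := Nat.gcd_comm _ _
          _ = 1 := ha.2
    · intro a ha
      have h1 := hmem a ha
      simp only [hTdef, mem_filter, mem_range] at ha ⊢
      constructor
      · omega
      · have : n = a + (n - a) := by omega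
        calc Nat.gcd (n - a) n = Nat.gcd (n - a) (a + (n - a)) := by rw [← this]
          _ = Nat.gcd (n - a) a := Nat.gcd_add_self_right _ _
          _ = Nat.gcd n a := Nat.gcd_sub_self_left h1.2.le
          _ = Nat.gcd a n := Nat.gcd_comm _ _
          _ = 1 := ha.2
    · intro a ha
      have := hmem a ha
      show n - (n - a) = a
      omega
    · intro a ha
      have := hmem a ha
      show n - (n - a) = a
      omega
    · intro a _; rfl
  -- square of P
  have hC : (0:ℝ) < (((cyclotomic n ℤ).eval 1 : ℤ) : ℝ) := by
    have : (0:ℤ) < (cyclotomic n ℤ).eval 1 := by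
      rcases Nat.lt_or_ge n 3 with h | h
      · have hn2 : n = 2 := by omega
        subst hn2
        simp [cyclotomic_two]
      · exact cyclotomic_pos (by omega) 1
    exact_mod_cast this
  have hP2 : P ^ 2 = (2 * Real.pi) ^ n.totient / (((cyclotomic n ℤ).eval 1 : ℤ) : ℝ) := by
    have step1 : P ^ 2 = ∏ j ∈ T, (Real.Gamma ((j : ℝ) / n) * Real.Gamma (1 - (j : ℝ) / n)) := by
      calc P ^ 2 = P * ∏ j ∈ T, Real.Gamma (((n - j : ℕ) : ℝ) / n) := by rw [hinv, sq]
        _ = ∏ j ∈ T, (Real.Gamma ((j : ℝ) / n) * Real.Gamma (((n - j : ℕ) : ℝ) / n)) := by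
            rw [hPdef, ← Finset.prod_mul_distrib]
        _ = ∏ j ∈ T, (Real.Gamma ((j : ℝ) / n) * Real.Gamma (1 - (j : ℝ) / n)) := by
            refine Finset.prod_congr rfl fun j hj => ?_
            congr 2
            have h1 := hmem j hj
            rw [Nat.cast_sub h1.2.le]
            field_simp
    have step2 : ∀ j ∈ T, Real.Gamma ((j : ℝ) / n) * Real.Gamma (1 - (j : ℝ) / n)
        = (2 * Real.pi) / (2 * Real.sin (Real.pi * j / n)) := by
      intro j hj
      rw [Real.Gamma_mul_Gamma_one_sub]
      rw [show Real.pi * ((j : ℝ) / n) = Real.pi * j / n by ring]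
      rw [mul_div_mul_left _ _ (by norm_num : (2:ℝ) ≠ 0)]
    rw [step1, Finset.prod_congr rfl step2, Finset.prod_div_distrib, Finset.prod_const, hcard,
      prod_two_sin n hn]
  -- conclude the general formula
  have hsqrtC : 0 < Real.sqrt (((cyclotomic n ℤ).eval 1 : ℤ) : ℝ) := Real.sqrt_pos.mpr hC
  have key : P = (1 / Real.sqrt (((cyclotomic n ℤ).eval 1 : ℤ) : ℝ))
      * (2 * Real.pi) ^ ((n.totient : ℝ) / 2) := by
    have h2π : (0:ℝ) ≤ 2 * Real.pi := by positivity
    have hrp : (2 * Real.pi) ^ ((n.totient : ℝ) / 2)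
        = Real.sqrt ((2 * Real.pi) ^ n.totient) := by
      rw [Real.sqrt_eq_rpow, ← Real.rpow_natCast (2 * Real.pi) n.totient,
        ← Real.rpow_mul h2π]
      congr 1
      ring
    rw [hrp]
    rw [← Real.sqrt_sq hPpos.le, hP2, Real.sqrt_div' _ ?_]
    · ring
    · positivity
  refine ⟨fun hnpp => ?_, fun p ν hp hν hnp => ?_⟩
  · rw [hS, ← hPdef, key]
    have : (cyclotomic n ℤ).eval 1 = 1 := by
      apply eval_one_cyclotomic_not_prime_pow
      intro p hp k hk
      rcases Nat.eq_zero_or_pos k with rfl | hk0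
      · simp at hk; omega
      · exact hnpp ⟨p, k, hp.prime, hk0, hk⟩
    rw [this]
    norm_num
  · rw [hS, ← hPdef, key]
    have : (cyclotomic n ℤ).eval 1 = p := by
      haveI : Fact p.Prime := ⟨hp⟩
      rw [hnp, show ν = (ν - 1) + 1 by omega]
      exact eval_one_cyclotomic_prime_pow (ν - 1)
    rw [this]
    norm_num
end

section
/- Let q > 1 be an integer and let χ be a primitive nonprincipal Dirichlet character with conductor q. Then the limit as N → ∞ of the partial sums ∑_{k=1}^{N} χ(k)/k exists and equals −(1/q) · ∑_{j=1}^{q−1} χ(j)·ψ(j/q), where ψ(z) = Γ′(z)/Γ(z) is the digamma function. -/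
open Filter Finset

/-- The digamma function `ψ(z) = Γ'(z)/Γ(z)`. -/
noncomputable def digamma (z : ℂ) : ℂ := deriv Complex.Gamma z / Complex.Gamma z

open Real Topology

local notation "γ" => Real.eulerMascheroniConstant




/-- Partial harmonic sum as a real number. -/
noncomputable def hsum (N : ℕ) : ℝ := ∑ n ∈ range N, ((n : ℝ) + 1)⁻¹

lemma hsum_eq_harmonic (N : ℕ) : hsum N = (harmonic N : ℝ) := by
  rw [hsum, harmonic]
  push_cast
  rfl

lemma deriv_logGamma_add_one {x : ℝ} (hx : 0 < x) :
    deriv (Real.log ∘ Real.Gamma) (x + 1) = deriv (Real.log ∘ Real.Gamma) x + 1 / x := by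
  have h_rec (y : ℝ) (hy : 0 < y) : (Real.log ∘ Real.Gamma) (y + 1)
      = (Real.log ∘ Real.Gamma) y + Real.log y := by
    simp only [Function.comp_apply, Real.Gamma_add_one hy.ne',
      Real.log_mul hy.ne' (Real.Gamma_pos_of_pos hy).ne', add_comm]
  have hder {y : ℝ} (hy : 0 < y) : DifferentiableAt ℝ (Real.log ∘ Real.Gamma) y := by
    refine ((Real.differentiableAt_Gamma ?_).log (Real.Gamma_ne_zero ?_)) <;>
      exact fun m ↦ ((neg_nonpos.mpr m.cast_nonneg).trans_lt hy).ne'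
  rw [← deriv_comp_add_const, one_div, ← Real.deriv_log,
    ← deriv_add (hder hx) (Real.differentiableAt_log hx.ne')]
  apply Filter.EventuallyEq.deriv_eq
  filter_upwards [eventually_gt_nhds hx] using h_rec

lemma deriv_logGamma_nat (n : ℕ) :
    deriv (Real.log ∘ Real.Gamma) (n + 1) = -γ + hsum n := by
  have hΓpos : (0:ℝ) < Real.Gamma (n + 1) := Real.Gamma_pos_of_pos (by positivity)
  have : deriv (Real.log ∘ Real.Gamma) (n+1)
      = deriv Real.Gamma (n+1) / Real.Gamma (n+1) := by
    rw [Function.comp_def, deriv.log (Real.differentiableAt_Gamma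
      (fun m ↦ by push_cast; intro h; nlinarith [m.cast_nonneg (α := ℝ), n.cast_nonneg (α := ℝ)]))
      hΓpos.ne']
  rw [this, Real.deriv_Gamma_nat, Real.Gamma_nat_eq_factorial, hsum_eq_harmonic]
  field_simp

lemma deriv_logGamma_add_nat {x : ℝ} (hx : 0 < x) (n : ℕ) :
    deriv (Real.log ∘ Real.Gamma) (x + n)
      = deriv (Real.log ∘ Real.Gamma) x + ∑ k ∈ range n, (x + k)⁻¹ := by
  induction n with
  | zero => simp
  | succ n ih =>
      have : x + (n + 1 : ℕ) = (x + n) + 1 := by push_cast; ring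
      rw [this, deriv_logGamma_add_one (by positivity), ih, sum_range_succ, one_div]
      push_cast
      ring

lemma deriv_logGamma_mono {a b : ℝ} (ha : 0 < a) (hab : a < b) :
    deriv (Real.log ∘ Real.Gamma) a ≤ deriv (Real.log ∘ Real.Gamma) b := by
  have hc : ConvexOn ℝ (Set.Ioi 0) (Real.log ∘ Real.Gamma) := Real.convexOn_log_Gamma
  have hder {y : ℝ} (hy : 0 < y) : DifferentiableAt ℝ (Real.log ∘ Real.Gamma) y := by
    refine ((Real.differentiableAt_Gamma ?_).log (Real.Gamma_ne_zero ?_)) <;>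
      exact fun m ↦ ((neg_nonpos.mpr m.cast_nonneg).trans_lt hy).ne'
  have hb : 0 < b := ha.trans hab
  exact (hc.deriv_le_slope (Set.mem_Ioi.mpr ha) (Set.mem_Ioi.mpr hb) hab (hder ha)).trans
    (hc.slope_le_deriv (Set.mem_Ioi.mpr ha) (Set.mem_Ioi.mpr hb) hab (hder hb))

/-- The digamma series: for `0 < x < 1`,
`∑_{n<N} 1/(x+n) - H_N → -ψ(x) - γ`. -/
lemma tendsto_digamma_series {x : ℝ} (h0 : 0 < x) (h1 : x < 1) :
    Tendsto (fun N : ℕ => (∑ n ∈ range N, (x + n)⁻¹) - hsum N) atTop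
      (𝓝 (-(deriv Real.Gamma x / Real.Gamma x) - γ)) := by
  have hψ : deriv Real.Gamma x / Real.Gamma x = deriv (Real.log ∘ Real.Gamma) x := by
    rw [Function.comp_def, deriv.log (Real.differentiableAt_Gamma
      (fun m ↦ ((neg_nonpos.mpr m.cast_nonneg).trans_lt h0).ne'))
      (Real.Gamma_pos_of_pos h0).ne']
  rw [hψ]
  set ψ := deriv (Real.log ∘ Real.Gamma) x with hψdef
  -- bounds for N ≥ 1
  have key : ∀ N : ℕ, 1 ≤ N →
      -ψ - γ - (N : ℝ)⁻¹ ≤ (∑ n ∈ range N, (x + n)⁻¹) - hsum N ∧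
      (∑ n ∈ range N, (x + n)⁻¹) - hsum N ≤ -ψ - γ := by
    intro N hN
    have hup : deriv (Real.log ∘ Real.Gamma) (x + N)
        ≤ deriv (Real.log ∘ Real.Gamma) (N + 1) := by
      apply deriv_logGamma_mono (by positivity)
      linarith [(Nat.one_le_cast (α := ℝ)).mpr hN]
    have hlo : deriv (Real.log ∘ Real.Gamma) ((N - 1 : ℕ) + 1)
        ≤ deriv (Real.log ∘ Real.Gamma) (x + N) := by
      apply deriv_logGamma_mono (by positivity)
      have : ((N - 1 : ℕ) : ℝ) = (N : ℝ) - 1 := by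
        push_cast [Nat.cast_sub hN]; ring
      rw [this]
      linarith
    rw [deriv_logGamma_add_nat h0, deriv_logGamma_nat] at hup
    rw [deriv_logGamma_add_nat h0, deriv_logGamma_nat] at hlo
    have hsumN : hsum N = hsum (N - 1) + (N : ℝ)⁻¹ := by
      have : N = (N - 1) + 1 := (Nat.succ_pred_eq_of_pos hN).symm
      rw [this, hsum, sum_range_succ, ← hsum]
      push_cast [Nat.cast_sub hN]
      ring_nf
    constructor
    · nlinarith [hlo, hsumN]
    · nlinarith [hup]
  have hle : ∀ᶠ N : ℕ in atTop,
      -ψ - γ - (N : ℝ)⁻¹ ≤ (∑ n ∈ range N, (x + n)⁻¹) - hsum N := by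
    filter_upwards [eventually_ge_atTop 1] with N hN using (key N hN).1
  have hge : ∀ᶠ N : ℕ in atTop,
      (∑ n ∈ range N, (x + n)⁻¹) - hsum N ≤ -ψ - γ := by
    filter_upwards [eventually_ge_atTop 1] with N hN using (key N hN).2
  have hlb : Tendsto (fun N : ℕ => -ψ - γ - (N : ℝ)⁻¹) atTop (𝓝 (-ψ - γ)) := by
    simpa using (tendsto_const_nhds (x := -ψ - γ)).sub tendsto_inv_atTop_nhds_zero_nat
  exact tendsto_of_tendsto_of_tendsto_of_le_of_le' hlb tendsto_const_nhds hle hge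

lemma deriv_complexGamma_ofReal {x : ℝ} (h0 : 0 < x) :
    deriv Complex.Gamma (x : ℂ) = ((deriv Real.Gamma x : ℝ) : ℂ) := by
  have hne : ∀ m : ℕ, (x : ℂ) ≠ -m := by
    intro m
    rw [← Complex.ofReal_natCast, ← Complex.ofReal_neg, ne_eq, Complex.ofReal_inj]
    exact ((neg_nonpos.mpr m.cast_nonneg).trans_lt h0).ne'
  have hneR : ∀ m : ℕ, x ≠ -(m : ℝ) :=
    fun m ↦ ((neg_nonpos.mpr m.cast_nonneg).trans_lt h0).ne'
  have hdC : DifferentiableAt ℂ Complex.Gamma (x : ℂ) := Complex.differentiableAt_Gamma _ hne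
  have hdR : HasDerivAt Real.Gamma (deriv Real.Gamma x) x :=
    (Real.differentiableAt_Gamma hneR).hasDerivAt
  have hfg : ∀ s : ℝ, Complex.Gamma (s : ℂ) = ((Real.Gamma s : ℝ) : ℂ) :=
    fun s ↦ Complex.Gamma_ofReal s
  rw [← (funext hfg ▸ hdC.hasDerivAt.comp_ofReal.deriv :)]
  exact hdR.ofReal_comp.deriv

lemma digamma_ofReal {x : ℝ} (h0 : 0 < x) :
    digamma (x : ℂ) = ((deriv Real.Gamma x / Real.Gamma x : ℝ) : ℂ) := by
  rw [digamma, deriv_complexGamma_ofReal h0, Complex.Gamma_ofReal, Complex.ofReal_div]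

lemma sum_range_mul' (f : ℕ → ℂ) (q N : ℕ) :
    ∑ i ∈ range (q * N), f i = ∑ n ∈ range N, ∑ j ∈ range q, f (n * q + j) := by
  induction N with
  | zero => simp
  | succ N ih =>
      rw [Nat.mul_succ, Finset.sum_range_add, ih, sum_range_succ]
      congr 1
      exact Finset.sum_congr rfl fun j _ => by rw [mul_comm q N]

lemma zmod_sum_range {q : ℕ} [NeZero q] (g : ZMod q → ℂ) :
    ∑ j ∈ range q, g (j : ZMod q) = ∑ a : ZMod q, g a := by
  refine Finset.sum_nbij' (fun j => (j : ZMod q)) (fun a => a.val) ?_ ?_ ?_ ?_ ?_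
  · intro j _; exact Finset.mem_univ _
  · intro a _; exact Finset.mem_range.mpr (ZMod.val_lt a)
  · intro j hj; exact ZMod.val_natCast_of_lt (Finset.mem_range.mp hj)
  · intro a _; exact ZMod.natCast_zmod_val a
  · intro j _; rfl


/-- Corollary 2, first identity: for a primitive nonprincipal Dirichlet character `χ`
of conductor `q > 1`, `∑_{k≥1} χ(k)/k = -(1/q) ∑_{j=1}^{q-1} χ(j) ψ(j/q)`. -/
theorem L_one_eq_digamma_sum (q : ℕ) (hq : 1 < q)
    (χ : DirichletCharacter ℂ q) (hprim : χ.IsPrimitive) (hnp : χ ≠ 1) :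
    Tendsto (fun N : ℕ => ∑ k ∈ Icc 1 N, χ (k : ZMod q) / (k : ℂ)) atTop
      (nhds (-(1 / (q : ℂ)) *
        ∑ j ∈ Icc 1 (q - 1), χ (j : ZMod q) * digamma ((j : ℂ) / (q : ℂ)))) := by
  haveI : NeZero q := ⟨by omega⟩
  haveI : Fact (1 < q) := ⟨hq⟩
  have hq0 : 0 < q := by omega
  have hqR : (0:ℝ) < q := by exact_mod_cast hq0
  set S : ℕ → ℂ := fun M => ∑ k ∈ Icc 1 M, χ (k : ZMod q) / (k : ℂ) with hS
  set L : ℂ := -(1 / (q : ℂ)) *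
      ∑ j ∈ Icc 1 (q - 1), χ (j : ZMod q) * digamma ((j : ℂ) / (q : ℂ)) with hL
  set c : ℕ → ℂ := fun i => χ (((i + 1 : ℕ) : ZMod q)) with hc
  set ψr : ℕ → ℝ := fun i =>
    deriv Real.Gamma (((i:ℝ)+1)/q) / Real.Gamma (((i:ℝ)+1)/q) with hψr
  set B : ℕ → ℕ → ℝ := fun i N => (∑ n ∈ range N, ((((i:ℝ)+1)/q) + n)⁻¹) - hsum N with hB
  -- χ vanishes at 0 and q
  have hχ0 : χ (0 : ZMod q) = 0 := χ.map_nonunit not_isUnit_zero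
  have hχq : χ ((q : ℕ) : ZMod q) = 0 := by rw [ZMod.natCast_self]; exact hχ0
  -- sum over a full period vanishes
  have hper : ∑ i ∈ range q, c i = 0 := by
    have h1 : ∑ i ∈ range (q+1), χ ((i : ℕ) : ZMod q)
        = (∑ i ∈ range q, c i) + χ ((0:ℕ) : ZMod q) := Finset.sum_range_succ' _ _
    have h2 : ∑ i ∈ range (q+1), χ ((i : ℕ) : ZMod q)
        = (∑ i ∈ range q, χ ((i : ℕ) : ZMod q)) + χ ((q:ℕ) : ZMod q) :=
      Finset.sum_range_succ _ _
    have h3 : ∑ i ∈ range q, χ ((i : ℕ) : ZMod q) = 0 := by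
      rw [zmod_sum_range]; exact MulChar.sum_eq_zero_of_ne_one hnp
    have := h1.symm.trans h2
    rw [h3, hχq, add_zero, Nat.cast_zero, hχ0, add_zero] at this
    exact this
  have hctop : c (q - 1) = 0 := by
    have : (q - 1) + 1 = q := by omega
    show χ (((q - 1) + 1 : ℕ) : ZMod q) = 0
    rw [this]; exact hχq
  have hper' : ∑ i ∈ range (q - 1), c i = 0 := by
    have : ∑ i ∈ range q, c i = (∑ i ∈ range (q-1), c i) + c (q-1) := by
      have hq' : q = (q - 1) + 1 := by omega
      rw [hq', Finset.sum_range_succ]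
      simp [← hq']
    rw [hper, hctop, add_zero] at this
    exact this.symm
  -- x_i ∈ (0,1) for i < q-1
  have hx0 : ∀ i : ℕ, (0:ℝ) < ((i:ℝ)+1)/q := fun i => by positivity
  have hx1 : ∀ i ∈ range (q-1), ((i:ℝ)+1)/q < 1 := by
    intro i hi
    rw [div_lt_one hqR]
    have : i < q - 1 := Finset.mem_range.mp hi
    have : (i:ℝ) + 1 < q := by
      have : i + 1 < q := by omega
      exact_mod_cast this
    linarith
  -- The key exact identity for partial sums at multiples of q
  have hkey : ∀ N : ℕ, S (q * N) = ∑ i ∈ range (q - 1), c i * ((B i N : ℝ) : ℂ) / q := by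
    intro N
    have step1 : S (q * N)
        = ∑ n ∈ range N, ∑ j ∈ range q,
            χ (((1 + (n * q + j) : ℕ) : ZMod q)) / ((1 + (n * q + j) : ℕ) : ℂ) := by
      show (∑ k ∈ Icc 1 (q * N), χ (k : ZMod q) / (k : ℂ)) = _
      rw [← Finset.Ico_add_one_right_eq_Icc, Finset.sum_Ico_eq_sum_range]
      exact sum_range_mul' _ q N
    have step2 : ∀ n j : ℕ, j < q →
        χ (((1 + (n * q + j) : ℕ) : ZMod q)) / ((1 + (n * q + j) : ℕ) : ℂ)
          = c j * (((n * q + (j + 1) : ℕ) : ℂ))⁻¹ := by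
      intro n j hj
      have hcast : ((1 + (n * q + j) : ℕ) : ZMod q) = ((j + 1 : ℕ) : ZMod q) := by
        push_cast
        rw [ZMod.natCast_self]
        ring
      have hnat : 1 + (n * q + j) = n * q + (j + 1) := by omega
      rw [hcast, hnat, div_eq_mul_inv, hc]
    have step3 : S (q * N)
        = ∑ j ∈ range q, c j * ∑ n ∈ range N, (((n * q + (j + 1) : ℕ) : ℂ))⁻¹ := by
      rw [step1, Finset.sum_comm]
      refine Finset.sum_congr rfl fun j hj => ?_
      rw [Finset.mul_sum]
      exact Finset.sum_congr rfl fun n _ => step2 n j (Finset.mem_range.mp hj)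
    have step4 : ∀ j : ℕ, ∑ n ∈ range N, (((n * q + (j + 1) : ℕ) : ℂ))⁻¹
        = ((∑ n ∈ range N, ((((j:ℝ)+1)/q) + n)⁻¹ : ℝ) : ℂ) / q := by
      intro j
      rw [Complex.ofReal_sum, Finset.sum_div]
      refine Finset.sum_congr rfl fun n _ => ?_
      have h1 : (((j:ℝ)+1)/q + n) = ((n * q + (j + 1) : ℕ) : ℝ) / q := by
        push_cast
        field_simp
        ring
      have hqC : ((q : ℕ) : ℂ) ≠ 0 := Nat.cast_ne_zero.mpr hq0.ne'
      rw [h1, inv_div, Complex.ofReal_div, Complex.ofReal_natCast, Complex.ofReal_natCast,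
        div_right_comm, div_self hqC, one_div]
    have step5 : S (q * N) = ∑ j ∈ range (q - 1), c j *
        (((∑ n ∈ range N, ((((j:ℝ)+1)/q) + n)⁻¹ : ℝ) : ℂ) / q) := by
      rw [step3]
      have hq' : q = (q - 1) + 1 := by omega
      rw [hq', Finset.sum_range_succ, ← hq', hctop, zero_mul, add_zero]
      exact Finset.sum_congr rfl fun j _ => by rw [step4]
    rw [step5, hB]
    have hz : ∑ j ∈ range (q - 1), c j * (((hsum N : ℝ) : ℂ) / q) = 0 := by
      rw [← Finset.sum_mul, hper', zero_mul]
    calc ∑ j ∈ range (q - 1), c j * ((↑(∑ n ∈ range N, ((((j:ℝ)+1)/q) + n)⁻¹) : ℂ) / q)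
        = ∑ j ∈ range (q - 1), (c j * ((↑((∑ n ∈ range N, ((((j:ℝ)+1)/q) + n)⁻¹)
            - hsum N) : ℂ) / q) + c j * (((hsum N : ℝ) : ℂ) / q)) := by
          refine Finset.sum_congr rfl fun j _ => ?_
          push_cast
          ring
      _ = (∑ j ∈ range (q - 1), c j * ((↑((∑ n ∈ range N, ((((j:ℝ)+1)/q) + n)⁻¹)
            - hsum N) : ℂ) / q)) + ∑ j ∈ range (q - 1), c j * (((hsum N : ℝ) : ℂ) / q) :=
          Finset.sum_add_distrib
      _ = _ := by
          rw [hz, add_zero]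
          refine Finset.sum_congr rfl fun j _ => ?_
          show c j * ((↑((∑ n ∈ range N, ((((j:ℝ)+1)/q) + n)⁻¹) - hsum N) : ℂ) / q)
              = c j * (↑((∑ n ∈ range N, ((((j:ℝ)+1)/q) + n)⁻¹) - hsum N) : ℂ) / q
          rw [mul_div_assoc]
  -- limit along multiples of q
  have hterm : ∀ i ∈ range (q - 1),
      Tendsto (fun N : ℕ => c i * ((B i N : ℝ) : ℂ) / q) atTop
        (𝓝 (c i * (((-(ψr i) - γ : ℝ)) : ℂ) / q)) := by
    intro i hi
    have h1 : Tendsto (fun N : ℕ => ((B i N : ℝ) : ℂ)) atTop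
        (𝓝 (((-(ψr i) - γ : ℝ)) : ℂ)) :=
      (Complex.continuous_ofReal.tendsto _).comp (tendsto_digamma_series (hx0 i) (hx1 i hi))
    exact (h1.const_mul (c i)).div_const (q : ℂ)
  have hsubseq : Tendsto (fun N : ℕ => S (q * N)) atTop
      (𝓝 (∑ i ∈ range (q - 1), c i * (((-(ψr i) - γ : ℝ)) : ℂ) / q)) := by
    have := tendsto_finset_sum (range (q - 1)) hterm
    exact this.congr fun N => (hkey N).symm
  -- identify the limit with L
  have hV : (∑ i ∈ range (q - 1), c i * (((-(ψr i) - γ : ℝ)) : ℂ) / q) = L := by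
    have hsplit : ∀ i : ℕ, c i * (((-(ψr i) - γ : ℝ)) : ℂ) / q
        = -(1 / (q : ℂ)) * (c i * ((ψr i : ℝ) : ℂ)) + c i * (((-γ : ℝ)) : ℂ) / q := by
      intro i; push_cast; ring
    rw [Finset.sum_congr rfl fun i _ => hsplit i, Finset.sum_add_distrib]
    have h2 : ∑ i ∈ range (q - 1), c i * (((-γ : ℝ)) : ℂ) / q = 0 := by
      rw [← Finset.sum_div, ← Finset.sum_mul, hper', zero_mul, zero_div]
    rw [h2, add_zero, ← Finset.mul_sum, hL]
    congr 1
    rw [← Finset.Ico_add_one_right_eq_Icc, Finset.sum_Ico_eq_sum_range]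
    have hqq : (q - 1) + 1 - 1 = q - 1 := by omega
    rw [hqq]
    refine Finset.sum_congr rfl fun i hi => ?_
    have hd : digamma (((1 + i : ℕ) : ℂ) / (q : ℂ)) = ((ψr i : ℝ) : ℂ) := by
      have hx := digamma_ofReal (hx0 i)
      have hcst : ((((i : ℝ) + 1) / q : ℝ) : ℂ) = ((1 + i : ℕ) : ℂ) / (q : ℂ) := by
        push_cast; ring
      rw [← hcst, hx, hψr]
    rw [hd, Nat.add_comm 1 i]
  rw [hV] at hsubseq
  -- pass from multiples of q to the full limit
  have hquot : Tendsto (fun M : ℕ => M / q) atTop atTop := by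
    refine tendsto_atTop_atTop.mpr fun b => ⟨b * q, fun M hM => ?_⟩
    exact (Nat.le_div_iff_mul_le hq0).mpr hM
  have hmain : Tendsto (fun M : ℕ => S (q * (M / q))) atTop (𝓝 L) := hsubseq.comp hquot
  have hrem : Tendsto (fun M : ℕ => S M - S (q * (M / q))) atTop (𝓝 0) := by
    have hb : ∀ M : ℕ, ‖S M - S (q * (M / q))‖
        ≤ (q : ℝ) * (((q * (M / q) : ℕ) : ℝ) + 1)⁻¹ := by
      intro M
      set t := q * (M / q) with ht
      have htM : t ≤ M := Nat.mul_div_le M q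
      have hsplit : S M - S t = ∑ k ∈ Ioc t M, χ (k : ZMod q) / (k : ℂ) := by
        have hMe : S M = S t + ∑ k ∈ Ioc t M, χ (k : ZMod q) / (k : ℂ) := by
          rw [hS]
          show (∑ k ∈ Icc 1 M, χ (k : ZMod q) / (k : ℂ)) = _
          rw [show Icc 1 M = Ioc 0 M from Finset.Icc_add_one_left_eq_Ioc 0 M,
            ← Finset.sum_Ioc_consecutive _ (Nat.zero_le t) htM]
          show _ = (∑ k ∈ Icc 1 t, χ (k : ZMod q) / (k : ℂ)) + _
          rw [show Icc 1 t = Ioc 0 t from Finset.Icc_add_one_left_eq_Ioc 0 t]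
        rw [hMe]; ring
      rw [hsplit]
      calc ‖∑ k ∈ Ioc t M, χ (k : ZMod q) / (k : ℂ)‖
          ≤ ∑ k ∈ Ioc t M, ‖χ (k : ZMod q) / (k : ℂ)‖ := norm_sum_le _ _
        _ ≤ ∑ _k ∈ Ioc t M, ((t : ℝ) + 1)⁻¹ := by
            refine Finset.sum_le_sum fun k hk => ?_
            have hk1 : t + 1 ≤ k := (Finset.mem_Ioc.mp hk).1
            have hk0 : (0 : ℝ) < (t : ℝ) + 1 := by positivity
            have hkR : (t : ℝ) + 1 ≤ (k : ℝ) := by exact_mod_cast hk1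
            rw [norm_div, Complex.norm_natCast]
            have h1 : ‖χ ((k : ℕ) : ZMod q)‖ ≤ 1 := χ.norm_le_one _
            rw [div_eq_mul_inv]
            calc ‖χ ((k : ℕ) : ZMod q)‖ * ((k : ℝ))⁻¹ ≤ 1 * ((k : ℝ))⁻¹ :=
              mul_le_mul_of_nonneg_right h1 (by positivity)
              _ = ((k : ℝ))⁻¹ := one_mul _
              _ ≤ ((t : ℝ) + 1)⁻¹ := inv_anti₀ hk0 hkR
        _ = ((Ioc t M).card : ℝ) * ((t : ℝ) + 1)⁻¹ := by
            rw [Finset.sum_const, nsmul_eq_mul]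
        _ ≤ (q : ℝ) * ((t : ℝ) + 1)⁻¹ := by
            refine mul_le_mul_of_nonneg_right ?_ (by positivity)
            rw [Nat.card_Ioc]
            have hmod : M - t < q := by
              have h := Nat.mod_add_div M q
              have : M % q < q := Nat.mod_lt _ hq0
              omega
            exact_mod_cast hmod.le
    have hg : Tendsto (fun M : ℕ => (q : ℝ) * (((q * (M / q) : ℕ) : ℝ) + 1)⁻¹) atTop (𝓝 0) := by
      have h1 : Tendsto (fun M : ℕ => q * (M / q)) atTop atTop :=
        tendsto_atTop_mono (fun M => Nat.le_mul_of_pos_left _ hq0) hquot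
      have h2 : Tendsto (fun n : ℕ => (q : ℝ) * ((n : ℝ) + 1)⁻¹) atTop (𝓝 0) := by
        have h3 : Tendsto (fun n : ℕ => ((n : ℝ) + 1)⁻¹) atTop (𝓝 0) := by
          simpa [one_div] using tendsto_one_div_add_atTop_nhds_zero_nat (𝕜 := ℝ)
        simpa using h3.const_mul (q : ℝ)
      exact h2.comp h1
    exact squeeze_zero_norm hb hg
  have hfinal := hmain.add hrem
  rw [add_zero] at hfinal
  refine hfinal.congr fun M => ?_
  ring
end

section
/- Let χ be the nonprincipal Dirichlet character modulo 3 (so χ(k) = 1 if k ≡ 1 (mod 3), χ(k) = −1 if k ≡ 2 (mod 3), χ(k) = 0 if 3 ∣ k). Then for every integer n ≥ 1: L_{2n}(χ) = ((−1)^n/(2n)!)·(π/3)^{2n}, and for every integer n ≥ 0: L_{2n+1}(χ) = ((−1)^n/((2n+1)!·√3))·(π/3)^{2n+1}. -/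
open Filter Finset

/-- Partial sum of the multiple L-series:
`∑_{1 ≤ k₁ < k₂ < ⋯ < kₙ ≤ N} (χ(k₁)/k₁)⋯(χ(kₙ)/kₙ)`, encoded as a sum over
`n`-element subsets of `{1, …, N}`. -/
noncomputable def multipleLPartial (χ : ℕ → ℂ) (n N : ℕ) : ℂ :=
  ∑ S ∈ Finset.powersetCard n (Icc 1 N), ∏ k ∈ S, χ k / (k : ℂ)

namespace MultipleLAux

open Polynomial Complex Topology

/-! ### The generating polynomial and its coefficients -/

noncomputable def PP (χ : ℕ → ℂ) (N : ℕ) : Polynomial ℂ :=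
  ∏ k ∈ Icc 1 N, (Polynomial.C (χ k / k) * Polynomial.X + 1)

lemma coeff_PP (χ : ℕ → ℂ) (N n : ℕ) : (PP χ N).coeff n = multipleLPartial χ n N := by
  unfold PP multipleLPartial
  rw [Finset.prod_add]
  simp only [Finset.prod_const_one, mul_one, Finset.prod_mul_distrib, Finset.prod_const]
  have hC : ∀ t : Finset ℕ, (∏ k ∈ t, Polynomial.C (χ k / k)) = Polynomial.C (∏ k ∈ t, χ k / (k:ℂ)) :=
    fun t => (map_prod (Polynomial.C : ℂ →+* Polynomial ℂ) _ t).symm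
  simp only [hC]
  rw [Polynomial.finset_sum_coeff]
  simp only [Polynomial.coeff_C_mul, Polynomial.coeff_X_pow]
  rw [Finset.powersetCard_eq_filter, Finset.sum_filter]
  refine Finset.sum_congr rfl fun t _ => ?_
  by_cases h : t.card = n
  · simp [h]
  · simp [h, Ne.symm h]

lemma iteratedDeriv_polyeval (n : ℕ) : ∀ (p : Polynomial ℂ),
    iteratedDeriv n (fun x => p.eval x) = fun x => (Polynomial.derivative^[n] p).eval x := by
  induction n with
  | zero => intro p; simp
  | succ n ih =>
    intro p
    rw [iteratedDeriv_succ']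
    have h : deriv (fun x => p.eval x) = fun x => (Polynomial.derivative p).eval x :=
      funext fun x => Polynomial.deriv p
    rw [h, ih, Function.iterate_succ_apply]

lemma multipleLPartial_eq_iteratedDeriv (χ : ℕ → ℂ) (n N : ℕ) :
    multipleLPartial χ n N
      = ((n.factorial : ℂ))⁻¹ * iteratedDeriv n (fun x => (PP χ N).eval x) 0 := by
  have h := congrFun (iteratedDeriv_polyeval n (PP χ N)) 0
  rw [h, ← Polynomial.coeff_zero_eq_eval_zero,
    Polynomial.coeff_iterate_derivative, zero_add, Nat.descFactorial_self, ← coeff_PP χ N n,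
    nsmul_eq_mul,
    inv_mul_cancel_left₀ (by exact_mod_cast Nat.factorial_ne_zero n)]

/-! ### Generic product estimates -/

lemma norm_prod_one_add_sub_one_le {ι : Type*} (s : Finset ι) (u : ι → ℂ) (c : ι → ℝ)
    (h : ∀ i ∈ s, ‖u i‖ ≤ c i) :
    ‖(∏ i ∈ s, (1 + u i)) - 1‖ ≤ (∏ i ∈ s, (1 + c i)) - 1 := by
  classical
  induction s using Finset.cons_induction with
  | empty => simp
  | cons i s his ih =>
    have hc : ∀ j ∈ s, 0 ≤ c j := fun j hj =>
      le_trans (norm_nonneg _) (h j (Finset.mem_cons_of_mem hj))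
    have hci : 0 ≤ c i := le_trans (norm_nonneg _) (h i (Finset.mem_cons_self _ _))
    have hP1 : (1:ℝ) ≤ ∏ j ∈ s, (1 + c j) := by
      calc (1:ℝ) = ∏ _j ∈ s, (1:ℝ) := by simp
      _ ≤ ∏ j ∈ s, (1 + c j) := by
        refine Finset.prod_le_prod (fun j hj => by norm_num) (fun j hj => ?_)
        have := hc j hj; linarith
    have ihs := ih fun j hj => h j (Finset.mem_cons_of_mem hj)
    rw [Finset.prod_cons, Finset.prod_cons]
    have key : (1 + u i) * (∏ j ∈ s, (1 + u j)) - 1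
        = (1 + u i) * ((∏ j ∈ s, (1 + u j)) - 1) + u i := by ring
    rw [key]
    have h1 : ‖(1:ℂ) + u i‖ ≤ 1 + c i := by
      have hh := h i (Finset.mem_cons_self _ _)
      calc ‖(1:ℂ) + u i‖ ≤ ‖(1:ℂ)‖ + ‖u i‖ := norm_add_le _ _
      _ ≤ 1 + c i := by rw [norm_one]; linarith
    calc ‖(1 + u i) * ((∏ j ∈ s, (1 + u j)) - 1) + u i‖
        ≤ ‖(1 + u i)‖ * ‖(∏ j ∈ s, (1 + u j)) - 1‖ + ‖u i‖ := by
          refine le_trans (norm_add_le _ _) ?_; rw [norm_mul]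
      _ ≤ (1 + c i) * ((∏ j ∈ s, (1 + c j)) - 1) + c i := by
          have := h i (Finset.mem_cons_self _ _)
          have h0 : (0:ℝ) ≤ (∏ j ∈ s, (1 + c j)) - 1 := by linarith
          have := mul_le_mul h1 ihs (norm_nonneg _) (by linarith)
          linarith
      _ = (1 + c i) * (∏ j ∈ s, (1 + c j)) - 1 := by ring

lemma norm_prod_one_add_le {ι : Type*} (s : Finset ι) (u : ι → ℂ) (c : ι → ℝ)
    (h : ∀ i ∈ s, ‖u i‖ ≤ c i) :
    ‖∏ i ∈ s, (1 + u i)‖ ≤ ∏ i ∈ s, (1 + c i) := by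
  have h1 := norm_prod_one_add_sub_one_le s u c h
  have h2 : ‖∏ i ∈ s, (1 + u i)‖ - 1 ≤ ‖(∏ i ∈ s, (1 + u i)) - 1‖ := by
    have := norm_sub_norm_le (∏ i ∈ s, (1 + u i)) 1
    simpa using this
  linarith

lemma prod_one_add_le_exp {ι : Type*} (s : Finset ι) (c : ι → ℝ) (hc : ∀ i ∈ s, 0 ≤ c i) :
    ∏ i ∈ s, (1 + c i) ≤ Real.exp (∑ i ∈ s, c i) := by
  rw [Real.exp_sum]
  refine Finset.prod_le_prod (fun i hi => by linarith [hc i hi]) fun i hi => ?_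
  linarith [Real.add_one_le_exp (c i)]

/-! ### The paired product and the limit function -/

noncomputable def pairProd (x : ℂ) (m : ℕ) : ℂ :=
  ∏ j ∈ range m, ((1 + x / (3*(j:ℂ)+1)) * (1 - x / (3*(j:ℂ)+2)))

noncomputable def GG : ℂ → ℂ := fun x =>
  Complex.cos ((Real.pi : ℂ)/3 * x) + ((Real.sqrt 3 : ℝ):ℂ)⁻¹ * Complex.sin ((Real.pi : ℂ)/3 * x)

lemma re_pos_ne_zero {z : ℂ} (h : 0 < z.re) : z ≠ 0 := by
  intro h0; rw [h0] at h; simp at h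

lemma pairProd_tendsto {x : ℂ} (hx : ‖x‖ < 1) :
    Tendsto (pairProd x) atTop (𝓝 (GG x)) := by
  have hxre : |x.re| < 1 := lt_of_le_of_lt (Complex.abs_re_le_norm x) hx
  have hxre1 : -1 < x.re := by cases abs_lt.mp hxre; linarith
  have hxre2 : x.re < 1 := (abs_lt.mp hxre).2
  set a : ℂ := (1+x)/3 with ha
  set b : ℂ := (2-x)/3 with hb
  set c : ℂ := 1/3 with hc
  set d : ℂ := 2/3 with hd
  have hare : 0 < a.re := by
    have : a.re = (1 + x.re)/3 := by
      rw [ha]; rw [show ((3:ℂ)) = ((3:ℝ):ℂ) by norm_num, Complex.div_ofReal_re]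
      simp
    rw [this]; linarith
  have hbre : 0 < b.re := by
    have : b.re = (2 - x.re)/3 := by
      rw [hb]; rw [show ((3:ℂ)) = ((3:ℝ):ℂ) by norm_num, Complex.div_ofReal_re]
      simp [Complex.sub_re]
    rw [this]; linarith
  have haj : ∀ j : ℕ, a + j ≠ 0 := fun j => re_pos_ne_zero (by
    simp only [Complex.add_re, Complex.natCast_re]; positivity)
  have hbj : ∀ j : ℕ, b + j ≠ 0 := fun j => re_pos_ne_zero (by
    simp only [Complex.add_re, Complex.natCast_re]; positivity)
  have h31 : ∀ j : ℕ, (3*(j:ℂ)+1) ≠ 0 := by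
    intro j
    have : (3*(j:ℂ)+1) = ((3*j+1 : ℕ) : ℂ) := by push_cast; ring
    rw [this]; exact Nat.cast_ne_zero.mpr (by omega)
  have h32 : ∀ j : ℕ, (3*(j:ℂ)+2) ≠ 0 := by
    intro j
    have : (3*(j:ℂ)+2) = ((3*j+2 : ℕ) : ℂ) := by push_cast; ring
    rw [this]; exact Nat.cast_ne_zero.mpr (by omega)
  have hcj : ∀ j : ℕ, c + j ≠ 0 := by
    intro j hz
    exact h31 j (by rw [show (3*(j:ℂ)+1) = 3*(c + j) by rw [hc]; ring, hz, mul_zero])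
  have hdj : ∀ j : ℕ, d + j ≠ 0 := by
    intro j hz
    exact h32 j (by rw [show (3*(j:ℂ)+2) = 3*(d + j) by rw [hd]; ring, hz, mul_zero])
  have hpair : ∀ j : ℕ, (1 + x / (3*(j:ℂ)+1)) * (1 - x / (3*(j:ℂ)+2))
      = ((a+j)*(b+j))/((c+j)*(d+j)) := by
    intro j
    rw [eq_div_iff (mul_ne_zero (hcj j) (hdj j)), ha, hb, hc, hd]
    field_simp [h31 j, h32 j]
    ring
  have hprod : ∀ m : ℕ, pairProd x m
      = ((∏ j ∈ range m, (a+(j:ℂ))) * ∏ j ∈ range m, (b+(j:ℂ)))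
        / ((∏ j ∈ range m, (c+(j:ℂ))) * ∏ j ∈ range m, (d+(j:ℂ))) := by
    intro m
    unfold pairProd
    rw [Finset.prod_congr rfl fun j _ => hpair j]
    rw [Finset.prod_div_distrib, Finset.prod_mul_distrib, Finset.prod_mul_distrib]
  have hGS : ∀ m : ℕ, 1 ≤ m → pairProd x (m+1)
      = (Complex.GammaSeq c m * Complex.GammaSeq d m)
        / (Complex.GammaSeq a m * Complex.GammaSeq b m) := by
    intro m hm
    have hmne : ((m:ℂ)) ≠ 0 := Nat.cast_ne_zero.mpr (by omega)
    have hA : (∏ j ∈ range (m+1), (a+(j:ℂ))) ≠ 0 :=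
      Finset.prod_ne_zero_iff.mpr fun j _ => haj j
    have hB : (∏ j ∈ range (m+1), (b+(j:ℂ))) ≠ 0 :=
      Finset.prod_ne_zero_iff.mpr fun j _ => hbj j
    have hC : (∏ j ∈ range (m+1), (c+(j:ℂ))) ≠ 0 :=
      Finset.prod_ne_zero_iff.mpr fun j _ => hcj j
    have hD : (∏ j ∈ range (m+1), (d+(j:ℂ))) ≠ 0 :=
      Finset.prod_ne_zero_iff.mpr fun j _ => hdj j
    have hma : ((m:ℂ)) ^ a ≠ 0 := by simp [Complex.cpow_eq_zero_iff, hmne]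
    have hmb : ((m:ℂ)) ^ b ≠ 0 := by simp [Complex.cpow_eq_zero_iff, hmne]
    have hfac : ((m.factorial : ℂ)) ≠ 0 := Nat.cast_ne_zero.mpr (Nat.factorial_ne_zero m)
    have hsum : ((m:ℂ)) ^ a * ((m:ℂ)) ^ b = ((m:ℂ)) ^ c * ((m:ℂ)) ^ d := by
      rw [← Complex.cpow_add _ _ hmne, ← Complex.cpow_add _ _ hmne]
      congr 1
      rw [ha, hb, hc, hd]; ring
    rw [hprod (m+1)]
    rw [Complex.GammaSeq, Complex.GammaSeq, Complex.GammaSeq, Complex.GammaSeq]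
    rw [div_mul_div_comm, div_mul_div_comm]
    have hK : ((m:ℂ))^c * (m.factorial:ℂ) * (((m:ℂ))^d * (m.factorial:ℂ))
        = ((m:ℂ))^a * (m.factorial:ℂ) * (((m:ℂ))^b * (m.factorial:ℂ)) := by
      calc ((m:ℂ))^c * (m.factorial:ℂ) * (((m:ℂ))^d * (m.factorial:ℂ))
          = ((m:ℂ))^c * ((m:ℂ))^d * ((m.factorial:ℂ) * (m.factorial:ℂ)) := by ring
        _ = ((m:ℂ))^a * ((m:ℂ))^b * ((m.factorial:ℂ) * (m.factorial:ℂ)) := by rw [hsum]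
        _ = ((m:ℂ))^a * (m.factorial:ℂ) * (((m:ℂ))^b * (m.factorial:ℂ)) := by ring
    rw [hK, div_div_div_comm, div_self (mul_ne_zero (mul_ne_zero hma hfac) (mul_ne_zero hmb hfac)),
      one_div, inv_div]
  have hΓa : Complex.Gamma a ≠ 0 := by
    refine Complex.Gamma_ne_zero fun n => fun h => ?_
    have h2 : a.re = -(n:ℝ) := by rw [h]; simp
    rw [h2] at hare
    have := (Nat.cast_nonneg (α := ℝ) n); linarith
  have hΓb : Complex.Gamma b ≠ 0 := by
    refine Complex.Gamma_ne_zero fun n => fun h => ?_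
    have h2 : b.re = -(n:ℝ) := by rw [h]; simp
    rw [h2] at hbre
    have := (Nat.cast_nonneg (α := ℝ) n); linarith
  have htend : Tendsto (fun m => (Complex.GammaSeq c m * Complex.GammaSeq d m)
      / (Complex.GammaSeq a m * Complex.GammaSeq b m)) atTop
      (𝓝 ((Complex.Gamma c * Complex.Gamma d)/(Complex.Gamma a * Complex.Gamma b))) :=
    ((Complex.GammaSeq_tendsto_Gamma c).mul (Complex.GammaSeq_tendsto_Gamma d)).div
      ((Complex.GammaSeq_tendsto_Gamma a).mul (Complex.GammaSeq_tendsto_Gamma b))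
      (mul_ne_zero hΓa hΓb)
  have h1 : Tendsto (fun m => pairProd x (m+1)) atTop
      (𝓝 ((Complex.Gamma c * Complex.Gamma d)/(Complex.Gamma a * Complex.Gamma b))) := by
    refine htend.congr' ?_
    filter_upwards [eventually_ge_atTop 1] with m hm
    exact (hGS m hm).symm
  have h2 : Tendsto (pairProd x) atTop
      (𝓝 ((Complex.Gamma c * Complex.Gamma d)/(Complex.Gamma a * Complex.Gamma b))) := by
    rwa [← tendsto_add_atTop_iff_nat 1]
  suffices hL : (Complex.Gamma c * Complex.Gamma d)/(Complex.Gamma a * Complex.Gamma b) = GG x by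
    rwa [hL] at h2
  have hb1 : b = 1 - a := by rw [ha, hb]; ring
  have hd1 : d = 1 - c := by rw [hc, hd]; norm_num
  have hπ : ((Real.pi : ℂ)) ≠ 0 := Complex.ofReal_ne_zero.mpr Real.pi_ne_zero
  have hsina : Complex.sin ((Real.pi:ℂ) * a) ≠ 0 := by
    have h0 : (Real.pi:ℂ) / Complex.sin ((Real.pi:ℂ) * a) ≠ 0 := by
      rw [← Complex.Gamma_mul_Gamma_one_sub a, ← hb1]
      exact mul_ne_zero hΓa hΓb
    intro h; rw [h, div_zero] at h0; exact h0 rfl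
  have hs3 : (0:ℝ) < Real.sqrt 3 := Real.sqrt_pos.mpr (by norm_num)
  have h13 : ((Real.pi:ℂ))/3 = ((Real.pi/3 : ℝ) : ℂ) := by push_cast; ring
  have hπc : (Real.pi:ℂ) * c = ((Real.pi/3 : ℝ) : ℂ) := by rw [hc]; push_cast; ring
  have hsinc : Complex.sin ((Real.pi:ℂ) * c) = ((Real.sqrt 3 / 2 : ℝ) : ℂ) := by
    rw [hπc, ← Complex.ofReal_sin, Real.sin_pi_div_three]
  have hsincne : Complex.sin ((Real.pi:ℂ) * c) ≠ 0 := by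
    rw [hsinc]
    exact Complex.ofReal_ne_zero.mpr (by positivity)
  have hπa : (Real.pi:ℂ) * a = (Real.pi:ℂ)/3 + (Real.pi:ℂ)/3 * x := by rw [ha]; ring
  have hsin3 : Complex.sin ((Real.pi:ℂ)/3) = ((Real.sqrt 3/2 : ℝ):ℂ) := by
    rw [h13, ← Complex.ofReal_sin, Real.sin_pi_div_three]
  have hcos3 : Complex.cos ((Real.pi:ℂ)/3) = ((1/2 : ℝ):ℂ) := by
    rw [h13, ← Complex.ofReal_cos, Real.cos_pi_div_three]
  rw [hb1, hd1, Complex.Gamma_mul_Gamma_one_sub, Complex.Gamma_mul_Gamma_one_sub,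
    div_div_div_comm, div_self hπ, one_div, inv_div]
  rw [hπa, Complex.sin_add, hsin3, hcos3, hsinc]
  unfold GG
  have hs3c : ((Real.sqrt 3 : ℝ):ℂ) ≠ 0 := Complex.ofReal_ne_zero.mpr (ne_of_gt hs3)
  push_cast
  field_simp

/-! ### Uniform convergence -/

noncomputable def cseq (j : ℕ) : ℝ := 1/((j:ℝ)+1)^2

lemma cseq_nonneg (j : ℕ) : 0 ≤ cseq j := by unfold cseq; positivity

lemma summable_cseq : Summable cseq := by
  have h := Real.summable_one_div_nat_pow.mpr (show 1 < 2 by norm_num)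
  have h2 := (summable_nat_add_iff 1).mpr h
  refine h2.congr fun j => ?_
  unfold cseq
  push_cast
  ring

lemma pair_sub_one_norm (j : ℕ) (x : ℂ) (hx : ‖x‖ ≤ 1/2) :
    ‖(1 + x / (3*(j:ℂ)+1)) * (1 - x / (3*(j:ℂ)+2)) - 1‖ ≤ cseq j := by
  have hm1 : (3*(j:ℂ)+1) = ((3*j+1 : ℕ) : ℂ) := by push_cast; ring
  have hm2 : (3*(j:ℂ)+2) = ((3*j+2 : ℕ) : ℂ) := by push_cast; ring
  have hz1 : (3*(j:ℂ)+1) ≠ 0 := by rw [hm1]; exact Nat.cast_ne_zero.mpr (by omega)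
  have hz2 : (3*(j:ℂ)+2) ≠ 0 := by rw [hm2]; exact Nat.cast_ne_zero.mpr (by omega)
  have heq : (1 + x / (3*(j:ℂ)+1)) * (1 - x / (3*(j:ℂ)+2)) - 1
      = (x - x^2) / ((3*(j:ℂ)+1) * (3*(j:ℂ)+2)) := by
    field_simp
    ring
  rw [heq, norm_div, norm_mul, hm1, hm2, Complex.norm_natCast, Complex.norm_natCast]
  have hnum : ‖x - x^2‖ ≤ 1 := by
    calc ‖x - x^2‖ ≤ ‖x‖ + ‖x^2‖ := norm_sub_le _ _
    _ = ‖x‖ + ‖x‖^2 := by rw [norm_pow]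
    _ ≤ 1/2 + (1/2)^2 := by nlinarith [norm_nonneg x]
    _ ≤ 1 := by norm_num
  have hdenpos : (0:ℝ) < ((3*j+1 : ℕ) : ℝ) * ((3*j+2 : ℕ) : ℝ) := by positivity
  unfold cseq
  rw [div_le_div_iff₀ hdenpos (by positivity)]
  push_cast
  nlinarith [sq_nonneg ((j:ℝ)+1), Nat.cast_nonneg (α := ℝ) j]

noncomputable def cKK : ℝ := ∑' j, cseq j

noncomputable def EE : ℝ := Real.exp cKK

lemma EE_pos : 0 < EE := Real.exp_pos _

lemma norm_pairProd_le {x : ℂ} (hx : ‖x‖ ≤ 1/2) (m : ℕ) : ‖pairProd x m‖ ≤ EE := by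
  have h1 : pairProd x m
      = ∏ j ∈ range m, (1 + ((1 + x/(3*(j:ℂ)+1)) * (1 - x/(3*(j:ℂ)+2)) - 1)) := by
    unfold pairProd; exact Finset.prod_congr rfl fun j _ => by ring
  rw [h1]
  refine le_trans (norm_prod_one_add_le _ _ cseq fun j _ => pair_sub_one_norm j x hx) ?_
  refine le_trans (prod_one_add_le_exp _ _ fun j _ => cseq_nonneg j) ?_
  exact Real.exp_le_exp.mpr (Summable.sum_le_tsum _ (fun j _ => cseq_nonneg j) summable_cseq)

lemma pairProd_unif :
    TendstoUniformlyOn (fun m x => pairProd x m) GG atTop (Metric.closedBall 0 (1/2)) := by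
  have hT0 : Tendsto (fun m => ∑' j, cseq (j + m)) atTop (𝓝 0) := tendsto_sum_nat_add cseq
  have hIco : ∀ m m' : ℕ, ∑ j ∈ Ico m m', cseq j ≤ ∑' j, cseq (j + m) := by
    intro m m'
    rw [Finset.sum_Ico_eq_sum_range]
    have hs : Summable fun k => cseq (k + m) := (summable_nat_add_iff m).mpr summable_cseq
    refine le_trans (le_of_eq (Finset.sum_congr rfl fun i _ => by rw [add_comm])) ?_
    exact Summable.sum_le_tsum (range (m' - m)) (fun j _ => cseq_nonneg _) hs
  have hCauchy : ∀ x : ℂ, ‖x‖ ≤ 1/2 → ∀ m m' : ℕ, m ≤ m' →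
      ‖pairProd x m' - pairProd x m‖ ≤ EE * (Real.exp (∑' j, cseq (j + m)) - 1) := by
    intro x hx m m' hmm
    have hsplit : pairProd x m'
        = pairProd x m * ∏ j ∈ Ico m m', ((1 + x/(3*(j:ℂ)+1)) * (1 - x/(3*(j:ℂ)+2))) := by
      unfold pairProd
      rw [Finset.prod_range_mul_prod_Ico _ hmm]
    have hQ : ‖(∏ j ∈ Ico m m', ((1 + x/(3*(j:ℂ)+1)) * (1 - x/(3*(j:ℂ)+2)))) - 1‖
        ≤ Real.exp (∑' j, cseq (j + m)) - 1 := by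
      have e1 : (∏ j ∈ Ico m m', ((1 + x/(3*(j:ℂ)+1)) * (1 - x/(3*(j:ℂ)+2))))
          = ∏ j ∈ Ico m m', (1 + ((1 + x/(3*(j:ℂ)+1)) * (1 - x/(3*(j:ℂ)+2)) - 1)) :=
        Finset.prod_congr rfl fun j _ => by ring
      rw [e1]
      refine le_trans (norm_prod_one_add_sub_one_le _ _ cseq
        fun j _ => pair_sub_one_norm j x hx) ?_
      have := prod_one_add_le_exp (Ico m m') cseq (fun j _ => cseq_nonneg j)
      have h2 := Real.exp_le_exp.mpr (hIco m m')
      linarith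
    rw [hsplit]
    have e2 : pairProd x m * (∏ j ∈ Ico m m', ((1 + x/(3*(j:ℂ)+1)) * (1 - x/(3*(j:ℂ)+2))))
        - pairProd x m
        = pairProd x m * ((∏ j ∈ Ico m m', ((1 + x/(3*(j:ℂ)+1)) * (1 - x/(3*(j:ℂ)+2)))) - 1) := by
      ring
    rw [e2, norm_mul]
    exact mul_le_mul (norm_pairProd_le hx m) hQ (norm_nonneg _) (le_of_lt EE_pos)
  have hGdist : ∀ x : ℂ, ‖x‖ ≤ 1/2 → ∀ m : ℕ,
      ‖GG x - pairProd x m‖ ≤ EE * (Real.exp (∑' j, cseq (j + m)) - 1) := by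
    intro x hx m
    have hxlt : ‖x‖ < 1 := lt_of_le_of_lt hx (by norm_num)
    have htt : Tendsto (fun m' => ‖pairProd x m' - pairProd x m‖) atTop
        (𝓝 ‖GG x - pairProd x m‖) :=
      ((pairProd_tendsto hxlt).sub tendsto_const_nhds).norm
    refine le_of_tendsto htt ?_
    filter_upwards [eventually_ge_atTop m] with m' hm'
    exact hCauchy x hx m m' hm'
  rw [Metric.tendstoUniformlyOn_iff]
  intro ε hε
  have hexp : Tendsto (fun m => Real.exp (∑' j, cseq (j + m))) atTop (𝓝 1) := by
    have := (Real.continuous_exp.tendsto 0).comp hT0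
    simpa [Function.comp_def] using this
  have hb : Tendsto (fun m => EE * (Real.exp (∑' j, cseq (j + m)) - 1)) atTop (𝓝 0) := by
    have h1 : Tendsto (fun m => Real.exp (∑' j, cseq (j + m)) - 1) atTop (𝓝 0) := by
      simpa using hexp.sub (tendsto_const_nhds (x := (1:ℝ)))
    simpa using h1.const_mul EE
  filter_upwards [hb.eventually_lt_const hε] with m hm x hxs
  rw [dist_eq_norm]
  have hx : ‖x‖ ≤ 1/2 := by simpa [Metric.mem_closedBall, dist_eq_norm] using hxs
  exact lt_of_le_of_lt (hGdist x hx m) hm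

/-! ### Character-specific product identities -/

section
variable {χ : ℕ → ℂ}
  (hχ : ∀ k, χ k = if k % 3 = 1 then 1 else if k % 3 = 2 then -1 else 0)
include hχ

lemma eval_PP_three (m : ℕ) (x : ℂ) : (PP χ (3*m)).eval x = pairProd x m := by
  induction m with
  | zero => simp [PP, pairProd]
  | succ m ih =>
    have e3 : 3*(m+1) = (3*m+1)+1+1 := by ring
    rw [e3]
    unfold PP
    rw [Finset.prod_Icc_succ_top (by omega), Finset.prod_Icc_succ_top (by omega),
      Finset.prod_Icc_succ_top (by omega)]
    have hPP : (∏ k ∈ Icc 1 (3*m), (Polynomial.C (χ k / k) * Polynomial.X + 1)) = PP χ (3*m) := rfl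
    rw [hPP]
    have h1 : χ (3*m+1) = 1 := by
      rw [hχ]; have : (3*m+1) % 3 = 1 := by omega
      simp [this]
    have h2 : χ (3*m+1+1) = -1 := by
      rw [hχ]; have : (3*m+1+1) % 3 = 2 := by omega
      simp [this]
    have h3 : χ (3*m+1+1+1) = 0 := by
      rw [hχ]; have : (3*m+1+1+1) % 3 = 0 := by omega
      simp [this]
    simp only [Polynomial.eval_mul, Polynomial.eval_add, Polynomial.eval_one,
      Polynomial.eval_C, Polynomial.eval_X, h1, h2, h3, ih]
    have hpair : pairProd x (m+1)
        = pairProd x m * ((1 + x / (3*(m:ℂ)+1)) * (1 - x / (3*(m:ℂ)+2))) := by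
      unfold pairProd; rw [Finset.prod_range_succ]
    rw [hpair]
    have hm1 : ((3*m+1 : ℕ) : ℂ) = 3*(m:ℂ)+1 := by push_cast; ring
    have hm2 : ((3*m+1+1 : ℕ) : ℂ) = 3*(m:ℂ)+2 := by push_cast; ring
    rw [hm1, hm2]
    have hz1 : (3*(m:ℂ)+1) ≠ 0 := by
      rw [← hm1]; exact Nat.cast_ne_zero.mpr (by omega)
    have hz2 : (3*(m:ℂ)+2) ≠ 0 := by
      rw [← hm2]; exact Nat.cast_ne_zero.mpr (by omega)
    field_simp
    ring

lemma eval_PP_split (N : ℕ) (x : ℂ) :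
    (PP χ N).eval x = pairProd x (N/3) *
      ∏ k ∈ Ioc (3*(N/3)) N, (1 + χ k / k * x) := by
  have hq : 3*(N/3) ≤ N := Nat.mul_div_le N 3 |>.trans_eq rfl
  unfold PP
  have hIcc : Icc 1 N = Ioc 0 N := by rw [← Finset.Icc_add_one_left_eq_Ioc, zero_add]
  rw [hIcc]
  rw [← Finset.prod_Ioc_consecutive _ (Nat.zero_le _) hq]
  rw [Polynomial.eval_mul]
  have h1 : (∏ k ∈ Ioc 0 (3*(N/3)), (Polynomial.C (χ k / k) * Polynomial.X + 1)).eval x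
      = pairProd x (N/3) := by
    rw [← Finset.Icc_add_one_left_eq_Ioc]
    exact eval_PP_three hχ (N/3) x
  rw [h1, Polynomial.eval_prod]
  congr 1
  refine Finset.prod_congr rfl fun k hk => ?_
  rw [Polynomial.eval_add, Polynomial.eval_mul, Polynomial.eval_C, Polynomial.eval_X,
    Polynomial.eval_one]
  ring

lemma norm_chi_le (k : ℕ) : ‖χ k‖ ≤ 1 := by
  rw [hχ]; split_ifs <;> simp

lemma evalPP_unif :
    TendstoUniformlyOn (fun N x => (PP χ N).eval x) GG atTop (Metric.closedBall 0 (1/2)) := by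
  have hrest : ∀ N : ℕ, ∀ x : ℂ, ‖x‖ ≤ 1/2 →
      ‖(PP χ N).eval x - pairProd x (N/3)‖
        ≤ EE * ((1 + 1/(3*((N/3 : ℕ):ℝ)+1))^2 - 1) := by
    intro N x hx
    set q := N/3 with hqdef
    have hfac : ∀ k ∈ Ioc (3*q) N, ‖χ k / k * x‖ ≤ 1/(3*(q:ℝ)+1) := by
      intro k hk
      obtain ⟨hk1, _hk2⟩ := Finset.mem_Ioc.mp hk
      have hkR : (3*(q:ℝ)+1) ≤ (k:ℝ) := by
        have := Nat.cast_le (α := ℝ) |>.mpr (show 3*q+1 ≤ k by omega)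
        push_cast at this; linarith
      have hx1 : ‖x‖ ≤ 1 := by linarith
      calc ‖χ k / k * x‖ = ‖χ k‖ / ((k:ℕ):ℝ) * ‖x‖ := by
            rw [norm_mul, norm_div, Complex.norm_natCast]
      _ ≤ 1 / (3*(q:ℝ)+1) * 1 := by
            gcongr
            · exact norm_chi_le hχ k
      _ = 1/(3*(q:ℝ)+1) := mul_one _
    have e2 : (PP χ N).eval x - pairProd x q
        = pairProd x q * ((∏ k ∈ Ioc (3*q) N, (1 + χ k / k * x)) - 1) := by
      rw [eval_PP_split hχ N x]; ring
    rw [e2, norm_mul]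
    have hc0 : (0:ℝ) ≤ 1/(3*(q:ℝ)+1) := by positivity
    have hQ : ‖(∏ k ∈ Ioc (3*q) N, (1 + χ k / k * x)) - 1‖
        ≤ (1 + 1/(3*(q:ℝ)+1))^2 - 1 := by
      refine le_trans (norm_prod_one_add_sub_one_le _ _ (fun _ => 1/(3*(q:ℝ)+1)) hfac) ?_
      rw [Finset.prod_const]
      have hcard : (Ioc (3*q) N).card ≤ 2 := by
        rw [Nat.card_Ioc]; omega
      have := pow_le_pow_right₀ (by linarith : (1:ℝ) ≤ 1 + 1/(3*(q:ℝ)+1)) hcard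
      linarith
    exact mul_le_mul (norm_pairProd_le hx q) hQ (norm_nonneg _) (le_of_lt EE_pos)
  have hr0 : Tendsto (fun q : ℕ => EE * ((1 + 1/(3*(q:ℝ)+1))^2 - 1)) atTop (𝓝 0) := by
    have hd : Tendsto (fun q : ℕ => 1/(3*(q:ℝ)+1)) atTop (𝓝 0) := by
      have h1 : Tendsto (fun q : ℕ => 3*(q:ℝ)+1) atTop atTop :=
        tendsto_atTop_add_const_right _ 1
          ((tendsto_natCast_atTop_atTop).const_mul_atTop (by norm_num))
      simpa [one_div, Pi.inv_def] using h1.inv_tendsto_atTop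
    have h2 : Tendsto (fun q : ℕ => (1 + 1/(3*(q:ℝ)+1))^2 - 1) atTop (𝓝 0) := by
      have h3 := ((hd.const_add 1).pow 2).sub (tendsto_const_nhds (x := (1:ℝ)))
      have h4 : ((1:ℝ)+0)^2 - 1 = 0 := by norm_num
      rwa [h4] at h3
    simpa using h2.const_mul EE
  rw [Metric.tendstoUniformlyOn_iff]
  intro ε hε
  obtain ⟨M₁, hM₁⟩ := eventually_atTop.mp
    (Metric.tendstoUniformlyOn_iff.mp pairProd_unif (ε/2) (by linarith))
  obtain ⟨M₂, hM₂⟩ := eventually_atTop.mp (hr0.eventually_lt_const (show (0:ℝ) < ε/2 by linarith))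
  refine eventually_atTop.mpr ⟨3*(max M₁ M₂), fun N hN x hxs => ?_⟩
  have hq1 : M₁ ≤ N/3 := by
    have h := le_max_left M₁ M₂; omega
  have hq2 : M₂ ≤ N/3 := by
    have h := le_max_right M₁ M₂; omega
  have hx : ‖x‖ ≤ 1/2 := by simpa [Metric.mem_closedBall, dist_eq_norm] using hxs
  calc dist (GG x) ((PP χ N).eval x)
      ≤ dist (GG x) (pairProd x (N/3)) + dist (pairProd x (N/3)) ((PP χ N).eval x) :=
        dist_triangle _ _ _
    _ < ε/2 + ε/2 := by
        have hle : dist (pairProd x (N/3)) ((PP χ N).eval x)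
            ≤ EE * ((1 + 1/(3*((N/3:ℕ):ℝ)+1))^2 - 1) := by
          rw [dist_eq_norm, norm_sub_rev]
          exact hrest N x hx
        have h5 := hM₂ (N/3) hq2
        have h1 := hM₁ (N/3) hq1 x hxs
        linarith
    _ = ε := by ring

lemma iteratedDeriv_evalPP_tendsto (n : ℕ) :
    Tendsto (fun N => iteratedDeriv n (fun x => (PP χ N).eval x) 0) atTop
      (𝓝 (iteratedDeriv n GG 0)) := by
  have hopen : IsOpen (Metric.ball (0:ℂ) (1/2)) := Metric.isOpen_ball
  have hloc : ∀ k : ℕ, TendstoLocallyUniformlyOn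
      (fun N => iteratedDeriv k fun x => (PP χ N).eval x)
      (iteratedDeriv k GG) atTop (Metric.ball 0 (1/2)) := by
    intro k
    induction k with
    | zero =>
      simp only [iteratedDeriv_zero]
      exact ((evalPP_unif hχ).tendstoLocallyUniformlyOn).mono Metric.ball_subset_closedBall
    | succ k ih =>
      have hdiff : ∀ᶠ N in atTop, DifferentiableOn ℂ
          (iteratedDeriv k fun x => (PP χ N).eval x) (Metric.ball 0 (1/2)) := by
        refine Eventually.of_forall fun N => ?_
        rw [iteratedDeriv_polyeval]
        exact (Polynomial.differentiable _).differentiableOn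
      have h := ih.deriv hdiff hopen
      have h2 : (deriv ∘ fun N => iteratedDeriv k fun x => (PP χ N).eval x)
          = fun N => iteratedDeriv (k+1) fun x => (PP χ N).eval x :=
        funext fun N => (iteratedDeriv_succ).symm
      rw [h2, ← iteratedDeriv_succ] at h
      exact h
  have h0 : (0:ℂ) ∈ Metric.ball (0:ℂ) (1/2) := Metric.mem_ball_self (by norm_num)
  exact (hloc n).tendsto_at h0

end

/-! ### Iterated derivatives of the limit function -/

noncomputable def DD : ℂ → ℂ := fun x =>
  ((Real.pi:ℂ)/3) * (-Complex.sin ((Real.pi:ℂ)/3 * x)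
    + ((Real.sqrt 3:ℝ):ℂ)⁻¹ * Complex.cos ((Real.pi:ℂ)/3 * x))

lemma hasDerivAt_GG (x : ℂ) : HasDerivAt GG (DD x) x := by
  have hlin : HasDerivAt (fun y : ℂ => (Real.pi:ℂ)/3 * y) ((Real.pi:ℂ)/3) x := by
    simpa using (hasDerivAt_id x).const_mul ((Real.pi:ℂ)/3)
  have hcos := (Complex.hasDerivAt_cos ((Real.pi:ℂ)/3 * x)).comp x hlin
  have hsin := (Complex.hasDerivAt_sin ((Real.pi:ℂ)/3 * x)).comp x hlin
  have h := hcos.add (hsin.const_mul (((Real.sqrt 3:ℝ):ℂ)⁻¹))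
  refine h.congr_deriv ?_
  unfold DD
  ring

lemma hasDerivAt_DD (x : ℂ) : HasDerivAt DD (-((Real.pi:ℂ)/3)^2 * GG x) x := by
  have hlin : HasDerivAt (fun y : ℂ => (Real.pi:ℂ)/3 * y) ((Real.pi:ℂ)/3) x := by
    simpa using (hasDerivAt_id x).const_mul ((Real.pi:ℂ)/3)
  have hcos := (Complex.hasDerivAt_cos ((Real.pi:ℂ)/3 * x)).comp x hlin
  have hsin := (Complex.hasDerivAt_sin ((Real.pi:ℂ)/3 * x)).comp x hlin
  have h := ((hsin.neg).add (hcos.const_mul (((Real.sqrt 3:ℝ):ℂ)⁻¹))).const_mul ((Real.pi:ℂ)/3)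
  refine h.congr_deriv ?_
  unfold GG
  ring

lemma deriv_GG : deriv GG = DD := funext fun x => (hasDerivAt_GG x).deriv

lemma deriv_DD : deriv DD = fun x => -((Real.pi:ℂ)/3)^2 * GG x :=
  funext fun x => (hasDerivAt_DD x).deriv

lemma iteratedDeriv_GG_even (n : ℕ) :
    iteratedDeriv (2*n) GG = fun x => (-(((Real.pi:ℂ)/3)^2))^n * GG x := by
  induction n with
  | zero => funext x; simp
  | succ n ih =>
    have e : 2*(n+1) = (2*n+1)+1 := by ring
    rw [e, iteratedDeriv_succ, iteratedDeriv_succ, ih]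
    have hstep1 : deriv (fun x => (-(((Real.pi:ℂ)/3)^2))^n * GG x)
        = fun x => (-(((Real.pi:ℂ)/3)^2))^n * DD x := by
      funext x
      rw [deriv_const_mul _ (hasDerivAt_GG x).differentiableAt, (hasDerivAt_GG x).deriv]
    rw [hstep1]
    funext x
    rw [deriv_const_mul _ (hasDerivAt_DD x).differentiableAt, (hasDerivAt_DD x).deriv]
    ring

lemma iteratedDeriv_GG_odd (n : ℕ) :
    iteratedDeriv (2*n+1) GG = fun x => (-(((Real.pi:ℂ)/3)^2))^n * DD x := by
  rw [iteratedDeriv_succ, iteratedDeriv_GG_even]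
  funext x
  rw [deriv_const_mul _ (hasDerivAt_GG x).differentiableAt, (hasDerivAt_GG x).deriv]

lemma GG_zero : GG 0 = 1 := by
  unfold GG; simp

lemma DD_zero : DD 0 = ((Real.pi:ℂ)/3) * ((Real.sqrt 3:ℝ):ℂ)⁻¹ := by
  unfold DD; simp

end MultipleLAux

/-- Corollary 3(a): for the nonprincipal character mod 3,
`L_{2n}(χ) = ((-1)^n/(2n)!)(π/3)^{2n}` and
`L_{2n+1}(χ) = ((-1)^n/((2n+1)!√3))(π/3)^{2n+1}`. -/
theorem multiple_L_values_mod_three (χ : ℕ → ℂ)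
    (hχ : ∀ k, χ k = if k % 3 = 1 then 1 else if k % 3 = 2 then -1 else 0) :
    (∀ n : ℕ, 1 ≤ n →
      Tendsto (fun N => multipleLPartial χ (2 * n) N) atTop
        (nhds ((-1) ^ n / (Nat.factorial (2 * n) : ℂ) * ((Real.pi : ℂ) / 3) ^ (2 * n)))) ∧
    (∀ n : ℕ,
      Tendsto (fun N => multipleLPartial χ (2 * n + 1) N) atTop
        (nhds ((-1) ^ n / ((Nat.factorial (2 * n + 1) : ℂ) * (Real.sqrt 3 : ℂ)) *
          ((Real.pi : ℂ) / 3) ^ (2 * n + 1)))) := by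
  open MultipleLAux in
  constructor
  · intro n _
    have key : (fun N => multipleLPartial χ (2*n) N)
        = fun N => (((2*n).factorial : ℂ))⁻¹
            * iteratedDeriv (2*n) (fun x => (MultipleLAux.PP χ N).eval x) 0 :=
      funext fun N => MultipleLAux.multipleLPartial_eq_iteratedDeriv χ (2*n) N
    rw [key]
    have h := (MultipleLAux.iteratedDeriv_evalPP_tendsto hχ (2*n)).const_mul
      ((((2*n).factorial : ℂ))⁻¹)
    have hval : (((2*n).factorial : ℂ))⁻¹ * iteratedDeriv (2*n) MultipleLAux.GG 0
        = (-1) ^ n / (Nat.factorial (2 * n) : ℂ) * ((Real.pi : ℂ) / 3) ^ (2 * n) := by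
      rw [congrFun (MultipleLAux.iteratedDeriv_GG_even n) 0, MultipleLAux.GG_zero, mul_one]
      rw [show (-(((Real.pi:ℂ)/3)^2))^n = (-1)^n * ((Real.pi:ℂ)/3)^(2*n) by
        rw [neg_pow, ← pow_mul]]
      ring
    rwa [hval] at h
  · intro n
    have key : (fun N => multipleLPartial χ (2*n+1) N)
        = fun N => (((2*n+1).factorial : ℂ))⁻¹
            * iteratedDeriv (2*n+1) (fun x => (MultipleLAux.PP χ N).eval x) 0 :=
      funext fun N => MultipleLAux.multipleLPartial_eq_iteratedDeriv χ (2*n+1) N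
    rw [key]
    have h := (MultipleLAux.iteratedDeriv_evalPP_tendsto hχ (2*n+1)).const_mul
      ((((2*n+1).factorial : ℂ))⁻¹)
    have hs3 : ((Real.sqrt 3:ℝ):ℂ) ≠ 0 :=
      Complex.ofReal_ne_zero.mpr (ne_of_gt (Real.sqrt_pos.mpr (by norm_num)))
    have hfa : (((2*n+1).factorial : ℂ)) ≠ 0 :=
      Nat.cast_ne_zero.mpr (Nat.factorial_ne_zero _)
    have hval : (((2*n+1).factorial : ℂ))⁻¹ * iteratedDeriv (2*n+1) MultipleLAux.GG 0
        = (-1) ^ n / ((Nat.factorial (2 * n + 1) : ℂ) * (Real.sqrt 3 : ℂ))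
            * ((Real.pi : ℂ) / 3) ^ (2 * n + 1) := by
      rw [congrFun (MultipleLAux.iteratedDeriv_GG_odd n) 0, MultipleLAux.DD_zero]
      rw [show (-(((Real.pi:ℂ)/3)^2))^n = (-1)^n * ((Real.pi:ℂ)/3)^(2*n) by
        rw [neg_pow, ← pow_mul]]
      field_simp
      ring
    rwa [hval] at h
end

section
/- Let χ be the nonprincipal Dirichlet character modulo 4 (so χ(k) = 1 if k ≡ 1 (mod 4), χ(k) = −1 if k ≡ 3 (mod 4), χ(k) = 0 if k is even). Then for every integer n ≥ 1: L_{2n}(χ) = ((−1)^n/(2n)!)·(π/4)^{2n}, and for every integer n ≥ 0: L_{2n+1}(χ) = ((−1)^n/(2n+1)!)·(π/4)^{2n+1}. -/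
open Filter Finset

open Topology

namespace MLV
open Complex

noncomputable def chi4 (k : ℕ) : ℂ := if k % 4 = 1 then 1 else if k % 4 = 3 then -1 else 0

noncomputable def Q (N : ℕ) (z : ℂ) : ℂ := ∏ k ∈ Icc 1 N, (1 + z * (chi4 k / (k : ℂ)))

noncomputable def R (M : ℕ) (z : ℂ) : ℂ :=
  ∏ m ∈ range M, ((1 + z / (4 * (m : ℂ) + 1)) * (1 - z / (4 * (m : ℂ) + 3)))

noncomputable def E (N : ℕ) (z : ℂ) : ℂ :=
  if N % 4 = 1 ∨ N % 4 = 2 then 1 + z / (4 * (((N + 1) / 4 : ℕ) : ℂ) + 1) else 1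

noncomputable def Ffun (z : ℂ) : ℂ :=
  Complex.cos ((Real.pi : ℂ) * z / 4) + Complex.sin ((Real.pi : ℂ) * z / 4)

noncomputable def cc (n : ℕ) : ℂ := (-1)^(n/2) / (n.factorial : ℂ) * ((Real.pi : ℂ)/4)^n


lemma Q_eq_sum (N : ℕ) (z : ℂ) :
    Q N z = ∑ n ∈ range (N + 1), multipleLPartial chi4 n N * z ^ n := by
  classical
  have h1 : Q N z = ∑ t ∈ (Icc 1 N).powerset, z ^ t.card * ∏ k ∈ t, (chi4 k / (k : ℂ)) := by
    rw [Q]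
    have h := Finset.prod_add (fun k => z * (chi4 k / (k : ℂ))) (fun _ => (1 : ℂ)) (Icc 1 N)
    simp only [Finset.prod_const_one, mul_one] at h
    rw [show (∏ k ∈ Icc 1 N, (1 + z * (chi4 k / (k : ℂ)))) =
        ∏ k ∈ Icc 1 N, (z * (chi4 k / (k : ℂ)) + 1) by
      exact Finset.prod_congr rfl fun k _ => by ring]
    rw [h]
    refine Finset.sum_congr rfl fun t _ => ?_
    rw [Finset.prod_mul_distrib, Finset.prod_const]
  rw [h1, Finset.powerset_card_biUnion, Finset.sum_biUnion, Nat.card_Icc]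
  · simp only [Nat.add_sub_cancel]
    refine Finset.sum_congr rfl fun n _ => ?_
    rw [multipleLPartial, Finset.sum_mul]
    refine Finset.sum_congr rfl fun t ht => ?_
    rw [(Finset.mem_powersetCard.1 ht).2, mul_comm]
  · intro i _ j _ hij
    refine Finset.disjoint_left.2 fun t hti htj => hij ?_
    rw [← (Finset.mem_powersetCard.1 hti).2, ← (Finset.mem_powersetCard.1 htj).2]

lemma multipleLPartial_congr (χ : ℕ → ℂ) (hχ : ∀ k, χ k = chi4 k) (n N : ℕ) :
    multipleLPartial χ n N = multipleLPartial chi4 n N := by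
  unfold multipleLPartial
  exact Finset.sum_congr rfl fun t _ => Finset.prod_congr rfl fun k _ => by rw [hχ]

lemma Q_four (M : ℕ) (z : ℂ) : Q (4 * M) z = R M z := by
  induction M with
  | zero => simp [Q, R]
  | succ M ih =>
    have e4 : 4 * (M + 1) = (4 * M + 3) + 1 := by ring
    rw [e4, Q, Finset.prod_Icc_succ_top (by omega), Finset.prod_Icc_succ_top (by omega),
      Finset.prod_Icc_succ_top (by omega), Finset.prod_Icc_succ_top (by omega)]
    rw [show Icc 1 (4 * M) = Icc 1 (4 * M) from rfl]
    have hQ : (∏ k ∈ Icc 1 (4 * M), (1 + z * (chi4 k / (k : ℂ)))) = R M z := ih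
    have h1 : chi4 (4 * M + 1) = 1 := by
      have : (4 * M + 1) % 4 = 1 := by omega
      simp [chi4, this]
    have h2 : chi4 (4 * M + 2) = 0 := by
      have : (4 * M + 2) % 4 = 2 := by omega
      simp [chi4, this]
    have h3 : chi4 (4 * M + 3) = -1 := by
      have : (4 * M + 3) % 4 = 3 := by omega
      simp [chi4, this]
    have h4 : chi4 (4 * M + 3 + 1) = 0 := by
      have : (4 * M + 3 + 1) % 4 = 0 := by omega
      simp [chi4, this]
    rw [R, Finset.prod_range_succ, ← R, hQ, h1, h2, h3, h4]
    have c1 : ((4 * M + 1 : ℕ) : ℂ) = 4 * (M : ℂ) + 1 := by push_cast; ring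
    have c3 : ((4 * M + 3 : ℕ) : ℂ) = 4 * (M : ℂ) + 3 := by push_cast; ring
    rw [c1, c3]
    have hne1 : 4 * (M : ℂ) + 1 ≠ 0 := by
      have : (0:ℝ) < 4 * (M:ℝ) + 1 := by positivity
      intro h
      have := congrArg Complex.re h
      simp at this
      nlinarith [Nat.cast_nonneg (α := ℝ) M]
    have hne3 : 4 * (M : ℂ) + 3 ≠ 0 := by
      intro h
      have := congrArg Complex.re h
      simp at this
      nlinarith [Nat.cast_nonneg (α := ℝ) M]
    field_simp
    ring


lemma Q_eq_R_mul_E (N : ℕ) (z : ℂ) : Q N z = R ((N + 1) / 4) z * E N z := by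
  have step : ∀ m, 1 ≤ m + 1 → Q (m + 1) z = Q m z * (1 + z * (chi4 (m + 1) / ((m + 1 : ℕ) : ℂ))) := by
    intro m _
    rw [Q, Q, Finset.prod_Icc_succ_top (by omega)]
  have hchi1 : ∀ M, chi4 (4 * M + 1) = 1 := fun M => by
    have : (4 * M + 1) % 4 = 1 := by omega
    simp [chi4, this]
  have hchi2 : ∀ M, chi4 (4 * M + 2) = 0 := fun M => by
    have : (4 * M + 2) % 4 = 2 := by omega
    simp [chi4, this]
  have hN4 : N % 4 = 0 ∨ N % 4 = 1 ∨ N % 4 = 2 ∨ N % 4 = 3 := by omega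
  rcases hN4 with h | h | h | h
  · obtain ⟨M, rfl⟩ : ∃ M, N = 4 * M := ⟨N / 4, by omega⟩
    rw [Q_four, show (4 * M + 1) / 4 = M from by omega, E, if_neg (by omega), mul_one]
  · obtain ⟨M, rfl⟩ : ∃ M, N = 4 * M + 1 := ⟨N / 4, by omega⟩
    rw [step (4 * M) (by omega), Q_four, show (4 * M + 1 + 1) / 4 = M from by omega,
      E, if_pos (by omega), show (4 * M + 1 + 1) / 4 = M from by omega, hchi1 M]
    push_cast
    ring
  · obtain ⟨M, rfl⟩ : ∃ M, N = 4 * M + 2 := ⟨N / 4, by omega⟩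
    rw [show 4 * M + 2 = (4 * M + 1) + 1 from rfl, step (4 * M + 1) (by omega),
      step (4 * M) (by omega), Q_four, hchi1 M, hchi2 M,
      show (4 * M + 1 + 1 + 1) / 4 = M from by omega, E, if_pos (by omega),
      show (4 * M + 1 + 1 + 1) / 4 = M from by omega]
    push_cast
    ring
  · obtain ⟨M, rfl⟩ : ∃ M, N = 4 * M + 3 := ⟨N / 4, by omega⟩
    rw [show (4 * M + 3 + 1) / 4 = M + 1 from by omega, E, if_neg (by omega), mul_one]
    have hchi3 : chi4 (4 * M + 3) = -1 := by
      have : (4 * M + 3) % 4 = 3 := by omega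
      simp [chi4, this]
    rw [show 4 * M + 3 = (4 * M + 2) + 1 from rfl, step (4 * M + 2) (by omega),
      step (4 * M + 1) (by omega), step (4 * M) (by omega), Q_four, hchi1 M, hchi2 M, hchi3]
    have hR : R (M + 1) z = R M z * ((1 + z / (4 * (M : ℂ) + 1)) * (1 - z / (4 * (M : ℂ) + 3))) := by
      rw [R, Finset.prod_range_succ, ← R]
    rw [hR]
    push_cast
    ring

lemma prod_ne_zero_of_re_pos {s : ℂ} (hs : 0 < s.re) (M : ℕ) :
    (∏ j ∈ range M, (s + (j : ℂ))) ≠ 0 := by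
  refine Finset.prod_ne_zero_iff.2 fun j _ hcon => ?_
  have h := congrArg Complex.re hcon
  simp only [Complex.add_re, Complex.natCast_re, Complex.zero_re] at h
  nlinarith [Nat.cast_nonneg (α := ℝ) j]

lemma R_eq_gammaSeq (z : ℂ) (ha : 0 < ((1 + z) / 4).re) (ha' : 0 < ((3 - z) / 4).re)
    {M : ℕ} (hM : M ≠ 0) :
    R (M + 1) z = (Complex.GammaSeq (1/4) M * Complex.GammaSeq (3/4) M) /
      (Complex.GammaSeq ((1 + z)/4) M * Complex.GammaSeq ((3 - z)/4) M) := by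
  have h14 : (0:ℝ) < ((1:ℂ)/4).re := by norm_num
  have h34 : (0:ℝ) < ((3:ℂ)/4).re := by norm_num
  have hM0 : ((M:ℂ)) ≠ 0 := by exact_mod_cast hM
  have hfac : ((M.factorial : ℂ)) ≠ 0 := by exact_mod_cast Nat.factorial_ne_zero M
  have factor : ∀ j : ℕ, (1 + z / (4*(j:ℂ)+1)) * (1 - z/(4*(j:ℂ)+3))
      = (((1+z)/4 + (j:ℂ)) * ((3-z)/4 + (j:ℂ))) / (((1:ℂ)/4 + (j:ℂ)) * ((3:ℂ)/4 + (j:ℂ))) := by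
    intro j
    have h1 : (4*(j:ℂ)+1) ≠ 0 := by
      have hh : ((4*j+1 : ℕ) : ℂ) ≠ 0 := Nat.cast_ne_zero.2 (by omega)
      rwa [show ((4*j+1 : ℕ) : ℂ) = 4*(j:ℂ)+1 by push_cast; ring] at hh
    have h2 : (4*(j:ℂ)+3) ≠ 0 := by
      have hh : ((4*j+3 : ℕ) : ℂ) ≠ 0 := Nat.cast_ne_zero.2 (by omega)
      rwa [show ((4*j+3 : ℕ) : ℂ) = 4*(j:ℂ)+3 by push_cast; ring] at hh
    have h3 : ((1:ℂ)/4 + (j:ℂ)) ≠ 0 := fun hcon => h1 (by linear_combination (4:ℂ) * hcon)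
    have h4 : ((3:ℂ)/4 + (j:ℂ)) ≠ 0 := fun hcon => h2 (by linear_combination (4:ℂ) * hcon)
    have eq1 : (1 + z / (4*(j:ℂ)+1)) = ((1+z)/4 + (j:ℂ)) / ((1:ℂ)/4 + (j:ℂ)) := by
      rw [eq_div_iff h3]
      field_simp
      ring
    have eq2 : (1 - z / (4*(j:ℂ)+3)) = ((3-z)/4 + (j:ℂ)) / ((3:ℂ)/4 + (j:ℂ)) := by
      rw [eq_div_iff h4]
      field_simp
      ring
    rw [eq1, eq2, div_mul_div_comm]
  have hRP : R (M + 1) z =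
      ((∏ j ∈ range (M+1), ((1+z)/4 + (j:ℂ))) * (∏ j ∈ range (M+1), ((3-z)/4 + (j:ℂ)))) /
      ((∏ j ∈ range (M+1), ((1:ℂ)/4 + (j:ℂ))) * (∏ j ∈ range (M+1), ((3:ℂ)/4 + (j:ℂ)))) := by
    rw [R, Finset.prod_congr rfl fun j _ => factor j, Finset.prod_div_distrib,
      Finset.prod_mul_distrib, Finset.prod_mul_distrib]
  set Pa := ∏ j ∈ range (M+1), ((1+z)/4 + (j:ℂ)) with hPa
  set Pa' := ∏ j ∈ range (M+1), ((3-z)/4 + (j:ℂ)) with hPa'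
  set P1 := ∏ j ∈ range (M+1), ((1:ℂ)/4 + (j:ℂ)) with hP1
  set P3 := ∏ j ∈ range (M+1), ((3:ℂ)/4 + (j:ℂ)) with hP3
  have hPa0 : Pa ≠ 0 := prod_ne_zero_of_re_pos ha _
  have hPa'0 : Pa' ≠ 0 := prod_ne_zero_of_re_pos ha' _
  have hP10 : P1 ≠ 0 := prod_ne_zero_of_re_pos h14 _
  have hP30 : P3 ≠ 0 := prod_ne_zero_of_re_pos h34 _
  have hW : (M:ℂ)^((1:ℂ)/4) * (M:ℂ)^((3:ℂ)/4) = (M:ℂ) := by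
    rw [← Complex.cpow_add _ _ hM0, show (1:ℂ)/4 + 3/4 = 1 by norm_num, Complex.cpow_one]
  have hW2 : (M:ℂ)^((1+z)/4) * (M:ℂ)^((3-z)/4) = (M:ℂ) := by
    rw [← Complex.cpow_add _ _ hM0, show (1+z)/4 + (3-z)/4 = 1 by ring, Complex.cpow_one]
  have e1 : Complex.GammaSeq ((1+z)/4) M * Complex.GammaSeq ((3-z)/4) M
      = (M:ℂ) * ((M.factorial : ℂ) * (M.factorial : ℂ)) / (Pa * Pa') := by
    rw [Complex.GammaSeq, Complex.GammaSeq, div_mul_div_comm, ← hPa, ← hPa',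
      show (M:ℂ)^((1+z)/4) * (M.factorial : ℂ) * ((M:ℂ)^((3-z)/4) * (M.factorial : ℂ))
        = ((M:ℂ)^((1+z)/4) * (M:ℂ)^((3-z)/4)) * ((M.factorial : ℂ) * (M.factorial : ℂ)) by ring,
      hW2]
  have e2 : Complex.GammaSeq (1/4 : ℂ) M * Complex.GammaSeq (3/4 : ℂ) M
      = (M:ℂ) * ((M.factorial : ℂ) * (M.factorial : ℂ)) / (P1 * P3) := by
    rw [Complex.GammaSeq, Complex.GammaSeq, div_mul_div_comm, ← hP1, ← hP3,
      show (M:ℂ)^((1:ℂ)/4) * (M.factorial : ℂ) * ((M:ℂ)^((3:ℂ)/4) * (M.factorial : ℂ))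
        = ((M:ℂ)^((1:ℂ)/4) * (M:ℂ)^((3:ℂ)/4)) * ((M.factorial : ℂ) * (M.factorial : ℂ)) by ring,
      hW]
  rw [hRP, e1, e2]
  field_simp
lemma gamma_value (z : ℂ) (ha : 0 < ((1+z)/4).re) (ha' : 0 < ((3-z)/4).re) :
    Complex.Gamma (1/4) * Complex.Gamma (3/4) /
      (Complex.Gamma ((1+z)/4) * Complex.Gamma ((3-z)/4)) = Ffun z := by
  have hga : Complex.Gamma ((1+z)/4) ≠ 0 := Complex.Gamma_ne_zero_of_re_pos ha
  have hga' : Complex.Gamma ((3-z)/4) ≠ 0 := Complex.Gamma_ne_zero_of_re_pos ha'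
  have hg1 : Complex.Gamma (1/4 : ℂ) ≠ 0 := Complex.Gamma_ne_zero_of_re_pos (by norm_num)
  have hg3 : Complex.Gamma (3/4 : ℂ) ≠ 0 := Complex.Gamma_ne_zero_of_re_pos (by norm_num)
  have hpi : ((Real.pi : ℂ)) ≠ 0 := Complex.ofReal_ne_zero.2 Real.pi_ne_zero
  have r2 : Complex.Gamma ((1+z)/4) * Complex.Gamma ((3-z)/4)
      = (Real.pi : ℂ) / Complex.sin ((Real.pi : ℂ) * ((1+z)/4)) := by
    have h := Complex.Gamma_mul_Gamma_one_sub ((1+z)/4)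
    rwa [show 1 - (1+z)/4 = (3-z)/4 by ring] at h
  have r1 : Complex.Gamma (1/4 : ℂ) * Complex.Gamma (3/4 : ℂ)
      = (Real.pi : ℂ) / Complex.sin ((Real.pi : ℂ) * (1/4 : ℂ)) := by
    have h := Complex.Gamma_mul_Gamma_one_sub (1/4 : ℂ)
    rwa [show (1:ℂ) - 1/4 = 3/4 by norm_num] at h
  have hsa : Complex.sin ((Real.pi : ℂ) * ((1+z)/4)) ≠ 0 := by
    intro hcon; rw [hcon, div_zero] at r2; exact (mul_ne_zero hga hga') r2
  have hs4 : Complex.sin ((Real.pi : ℂ) * (1/4 : ℂ)) ≠ 0 := by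
    intro hcon; rw [hcon, div_zero] at r1; exact (mul_ne_zero hg1 hg3) r1
  rw [r1, r2]
  have gen : ∀ (a b c : ℂ), a ≠ 0 → b ≠ 0 → c ≠ 0 → (a/b)/(a/c) = c/b := by
    intro a b c ha0 hb0 hc0
    field_simp
  rw [gen _ _ _ hpi hs4 hsa]
  have hexp : (Real.pi : ℂ) * ((1+z)/4) = (Real.pi : ℂ)/4 + (Real.pi : ℂ) * z / 4 := by ring
  have h14 : (Real.pi : ℂ) * (1/4 : ℂ) = (Real.pi : ℂ)/4 := by ring
  rw [hexp, h14, Complex.sin_add]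
  have hcs : Complex.cos ((Real.pi : ℂ)/4) = Complex.sin ((Real.pi : ℂ)/4) := by
    rw [← Complex.sin_pi_div_two_sub]
    congr 1
    ring
  rw [hcs]
  have hs4' : Complex.sin ((Real.pi : ℂ)/4) ≠ 0 := by rwa [h14] at hs4
  rw [Ffun]
  field_simp

lemma R_tendsto (z : ℂ) (hz : ‖z‖ ≤ 1/2) : Tendsto (fun M => R M z) atTop (𝓝 (Ffun z)) := by
  have hre : |z.re| ≤ 1/2 := le_trans (Complex.abs_re_le_norm z) hz
  have hrea := abs_le.1 hre
  have ha : 0 < ((1+z)/4).re := by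
    rw [show ((1+z)/4 : ℂ) = (1+z) / ((4:ℝ):ℂ) by norm_num, Complex.div_ofReal_re]
    simp only [Complex.add_re, Complex.one_re]
    linarith [hrea.1]
  have ha' : 0 < ((3-z)/4).re := by
    rw [show ((3-z)/4 : ℂ) = (3-z) / ((4:ℝ):ℂ) by norm_num, Complex.div_ofReal_re]
    simp only [Complex.sub_re, Complex.re_ofNat]
    norm_num
    linarith [hrea.2]
  have key : Tendsto (fun M => (Complex.GammaSeq (1/4) M * Complex.GammaSeq (3/4) M) /
      (Complex.GammaSeq ((1 + z)/4) M * Complex.GammaSeq ((3 - z)/4) M)) atTop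
      (𝓝 (Complex.Gamma (1/4) * Complex.Gamma (3/4) /
        (Complex.Gamma ((1+z)/4) * Complex.Gamma ((3-z)/4)))) :=
    ((Complex.GammaSeq_tendsto_Gamma (1/4)).mul (Complex.GammaSeq_tendsto_Gamma (3/4))).div
      ((Complex.GammaSeq_tendsto_Gamma ((1+z)/4)).mul (Complex.GammaSeq_tendsto_Gamma ((3-z)/4)))
      (mul_ne_zero (Complex.Gamma_ne_zero_of_re_pos ha) (Complex.Gamma_ne_zero_of_re_pos ha'))
  rw [gamma_value z ha ha'] at key
  have h2 : Tendsto (fun M => R (M+1) z) atTop (𝓝 (Ffun z)) := by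
    refine key.congr' ?_
    filter_upwards [eventually_ne_atTop 0] with M hM
    exact (R_eq_gammaSeq z ha ha' hM).symm
  exact (tendsto_add_atTop_iff_nat 1).1 h2

lemma sum_two_div_sq_le (M : ℕ) : ∑ m ∈ range M, (2:ℝ)/((m:ℝ)+1)^2 ≤ 4 := by
  have h : ∀ m : ℕ, (2:ℝ)/((m:ℝ)+1)^2 ≤ 4/((m:ℝ)+1) - 4/(((m+1:ℕ):ℝ)+1) := by
    intro m
    push_cast
    have hm : (0:ℝ) < (m:ℝ)+1 := by positivity
    have hm2 : (0:ℝ) < (m:ℝ)+2 := by positivity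
    rw [show (m:ℝ) + 1 + 1 = (m:ℝ) + 2 by ring,
      div_sub_div _ _ (ne_of_gt hm) (ne_of_gt hm2), div_le_div_iff₀ (by positivity) (by positivity)]
    nlinarith [Nat.cast_nonneg (α := ℝ) m]
  calc ∑ m ∈ range M, (2:ℝ)/((m:ℝ)+1)^2
      ≤ ∑ m ∈ range M, ((4:ℝ)/((m:ℝ)+1) - 4/(((m+1:ℕ):ℝ)+1)) :=
        Finset.sum_le_sum fun m _ => h m
    _ = 4/(((0:ℕ):ℝ)+1) - 4/((M:ℝ)+1) := Finset.sum_range_sub' (fun m : ℕ => (4:ℝ)/((m:ℝ)+1)) M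
    _ ≤ 4 := by
        have : (0:ℝ) < (M:ℝ)+1 := by positivity
        have : 0 ≤ (4:ℝ)/((M:ℝ)+1) := by positivity
        norm_num
        linarith

lemma pair_bound (z : ℂ) (hz : ‖z‖ ≤ 1/2) (m : ℕ) :
    ‖(1 + z / (4*(m:ℂ)+1)) * (1 - z/(4*(m:ℂ)+3))‖ ≤ Real.exp ((2:ℝ)/((m:ℝ)+1)^2) := by
  have h1 : (4*(m:ℂ)+1) ≠ 0 := by
    have hh : ((4*m+1 : ℕ) : ℂ) ≠ 0 := Nat.cast_ne_zero.2 (by omega)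
    rwa [show ((4*m+1 : ℕ) : ℂ) = 4*(m:ℂ)+1 by push_cast; ring] at hh
  have h2 : (4*(m:ℂ)+3) ≠ 0 := by
    have hh : ((4*m+3 : ℕ) : ℂ) ≠ 0 := Nat.cast_ne_zero.2 (by omega)
    rwa [show ((4*m+3 : ℕ) : ℂ) = 4*(m:ℂ)+3 by push_cast; ring] at hh
  have key : (1 + z / (4*(m:ℂ)+1)) * (1 - z/(4*(m:ℂ)+3))
      = 1 + (z*2 - z^2) * ((((4*m+1)*(4*m+3) : ℕ) : ℂ))⁻¹ := by
    rw [show ((((4*m+1)*(4*m+3) : ℕ)) : ℂ) = (4*(m:ℂ)+1)*(4*(m:ℂ)+3) by push_cast; ring]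
    field_simp
    ring
  rw [key]
  have hw : ‖(z*2 - z^2) * ((((4*m+1)*(4*m+3) : ℕ) : ℂ))⁻¹‖ ≤ (2:ℝ)/((m:ℝ)+1)^2 := by
    rw [norm_mul, norm_inv, Complex.norm_natCast]
    have hn1 : ‖z*2 - z^2‖ ≤ 5/4 := by
      calc ‖z*2 - z^2‖ ≤ ‖z*2‖ + ‖z^2‖ := norm_sub_le _ _
        _ = ‖z‖*2 + ‖z‖^2 := by rw [norm_mul, norm_pow]; norm_num
        _ ≤ 5/4 := by nlinarith [norm_nonneg z]
    have hd : ((m:ℝ)+1)^2 ≤ (((4*m+1)*(4*m+3) : ℕ) : ℝ) := by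
      push_cast
      nlinarith [Nat.cast_nonneg (α := ℝ) m]
    have hdpos : (0:ℝ) < ((m:ℝ)+1)^2 := by positivity
    have hinv : ((((4*m+1)*(4*m+3) : ℕ) : ℝ))⁻¹ ≤ (((m:ℝ)+1)^2)⁻¹ := by
      apply inv_anti₀ hdpos hd
    calc ‖z*2 - z^2‖ * ((((4*m+1)*(4*m+3) : ℕ) : ℝ))⁻¹
        ≤ (5/4) * (((m:ℝ)+1)^2)⁻¹ := by
          apply mul_le_mul hn1 hinv (by positivity) (by norm_num)
      _ ≤ (2:ℝ)/((m:ℝ)+1)^2 := by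
          rw [div_eq_mul_inv]
          apply mul_le_mul_of_nonneg_right (by norm_num) (by positivity)
  calc ‖1 + (z*2 - z^2) * ((((4*m+1)*(4*m+3) : ℕ) : ℂ))⁻¹‖
      ≤ ‖(1:ℂ)‖ + ‖(z*2 - z^2) * ((((4*m+1)*(4*m+3) : ℕ) : ℂ))⁻¹‖ := norm_add_le _ _
    _ ≤ 1 + (2:ℝ)/((m:ℝ)+1)^2 := by rw [norm_one]; linarith
    _ ≤ Real.exp ((2:ℝ)/((m:ℝ)+1)^2) := by
        have := Real.add_one_le_exp ((2:ℝ)/((m:ℝ)+1)^2)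
        linarith

lemma R_bound (M : ℕ) (z : ℂ) (hz : ‖z‖ ≤ 1/2) : ‖R M z‖ ≤ Real.exp 4 := by
  rw [R, norm_prod]
  calc ∏ m ∈ range M, ‖(1 + z / (4 * (m : ℂ) + 1)) * (1 - z / (4 * (m : ℂ) + 3))‖
      ≤ ∏ m ∈ range M, Real.exp ((2:ℝ)/((m:ℝ)+1)^2) :=
        Finset.prod_le_prod (fun m _ => norm_nonneg _) (fun m _ => pair_bound z hz m)
    _ = Real.exp (∑ m ∈ range M, (2:ℝ)/((m:ℝ)+1)^2) := (Real.exp_sum _ _).symm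
    _ ≤ Real.exp 4 := Real.exp_le_exp.2 (sum_two_div_sq_le M)

lemma E_sub_one_bound (N : ℕ) (z : ℂ) (hz : ‖z‖ ≤ 1/2) :
    ‖E N z - 1‖ ≤ (1/2 : ℝ)/(4*((((N+1)/4 : ℕ)):ℝ)+1) := by
  have hpos : (0:ℝ) < 4*((((N+1)/4 : ℕ)):ℝ)+1 := by positivity
  rw [E]
  split
  · rw [add_sub_cancel_left, norm_div]
    have hden : ‖4*((((N+1)/4 : ℕ)):ℂ)+1‖ = 4*((((N+1)/4 : ℕ)):ℝ)+1 := by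
      rw [show 4*((((N+1)/4 : ℕ)):ℂ)+1 = ((4*((N+1)/4)+1 : ℕ) : ℂ) by push_cast; ring,
        Complex.norm_natCast]
      push_cast; ring
    rw [hden]
    exact div_le_div_of_nonneg_right hz hpos.le
  · simp only [sub_self, norm_zero]
    positivity

lemma E_bound (N : ℕ) (z : ℂ) (hz : ‖z‖ ≤ 1/2) : ‖E N z‖ ≤ 3/2 := by
  have h := E_sub_one_bound N z hz
  have hpos : (0:ℝ) < 4*((((N+1)/4 : ℕ)):ℝ)+1 := by positivity
  have h2 : (1/2 : ℝ)/(4*((((N+1)/4 : ℕ)):ℝ)+1) ≤ 1/2 := by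
    rw [div_le_iff₀ hpos]
    nlinarith [Nat.cast_nonneg (α := ℝ) ((N+1)/4)]
  calc ‖E N z‖ = ‖(E N z - 1) + 1‖ := by ring_nf
    _ ≤ ‖E N z - 1‖ + ‖(1:ℂ)‖ := norm_add_le _ _
    _ ≤ 3/2 := by rw [norm_one]; linarith

lemma Q_bound (N : ℕ) (z : ℂ) (hz : ‖z‖ ≤ 1/2) : ‖Q N z‖ ≤ 3/2 * Real.exp 4 := by
  rw [Q_eq_R_mul_E, norm_mul]
  have h1 := R_bound ((N+1)/4) z hz
  have h2 := E_bound N z hz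
  calc ‖R ((N+1)/4) z‖ * ‖E N z‖ ≤ Real.exp 4 * (3/2) :=
        mul_le_mul h1 h2 (norm_nonneg _) (le_trans (norm_nonneg _) h1)
    _ = 3/2 * Real.exp 4 := by ring

lemma E_tendsto (z : ℂ) (hz : ‖z‖ ≤ 1/2) : Tendsto (fun N => E N z) atTop (𝓝 1) := by
  rw [tendsto_iff_norm_sub_tendsto_zero]
  apply squeeze_zero (fun N => norm_nonneg _) (fun N => E_sub_one_bound N z hz)
  have hM : Tendsto (fun N : ℕ => (N+1)/4) atTop atTop :=
    Filter.tendsto_atTop_atTop.2 fun b => ⟨4*b, fun n hn => by omega⟩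
  have hden : Tendsto (fun m : ℕ => 4*((m:ℕ):ℝ)+1) atTop atTop := by
    apply tendsto_atTop_add_const_right
    exact Tendsto.const_mul_atTop (by norm_num) tendsto_natCast_atTop_atTop
  have h2 : Tendsto (fun m : ℕ => (1/2:ℝ)/(4*((m:ℕ):ℝ)+1)) atTop (𝓝 0) :=
    Tendsto.div_atTop tendsto_const_nhds hden
  exact h2.comp hM

lemma Q_tendsto (z : ℂ) (hz : ‖z‖ ≤ 1/2) : Tendsto (fun N => Q N z) atTop (𝓝 (Ffun z)) := by
  have hM : Tendsto (fun N : ℕ => (N+1)/4) atTop atTop :=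
    Filter.tendsto_atTop_atTop.2 fun b => ⟨4*b, fun n hn => by omega⟩
  have h1 : Tendsto (fun N => R ((N+1)/4) z) atTop (𝓝 (Ffun z)) := (R_tendsto z hz).comp hM
  have h2 := E_tendsto z hz
  have h3 := h1.mul h2
  rw [mul_one] at h3
  exact h3.congr fun N => (Q_eq_R_mul_E N z).symm


lemma cont_integrand (f : ℂ → ℂ) (hf : Continuous f) (n : ℕ) :
    Continuous (fun θ : ℝ => f ((1/2 : ℂ) * Complex.exp ((θ:ℂ) * Complex.I)) *
      Complex.exp (-(n:ℂ) * ((θ:ℂ) * Complex.I))) := by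
  apply Continuous.mul
  · exact hf.comp (continuous_const.mul (Complex.continuous_exp.comp
      (Complex.continuous_ofReal.mul continuous_const)))
  · exact Complex.continuous_exp.comp (continuous_const.mul
      (Complex.continuous_ofReal.mul continuous_const))

lemma integral_monomial (n m : ℕ) (a : ℂ) :
    (∫ θ in (0:ℝ)..(2*Real.pi), a * ((1/2 : ℂ) * Complex.exp ((θ:ℂ) * Complex.I))^m *
      Complex.exp (-(n:ℂ) * ((θ:ℂ) * Complex.I)))
    = if m = n then a * (2*Real.pi) * (1/2:ℂ)^n else 0 := by
  have hint : ∀ θ : ℝ, a * ((1/2:ℂ) * Complex.exp ((θ:ℂ)*Complex.I))^m *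
      Complex.exp (-(n:ℂ)*((θ:ℂ)*Complex.I))
      = a * (1/2:ℂ)^m * Complex.exp ((((m:ℂ) - n) * Complex.I) * (θ:ℂ)) := by
    intro θ
    rw [mul_pow, ← Complex.exp_nat_mul]
    calc a * ((1/2:ℂ)^m * Complex.exp ((m:ℂ)*((θ:ℂ)*Complex.I))) *
          Complex.exp (-(n:ℂ)*((θ:ℂ)*Complex.I))
        = a * (1/2:ℂ)^m * (Complex.exp ((m:ℂ)*((θ:ℂ)*Complex.I)) *
            Complex.exp (-(n:ℂ)*((θ:ℂ)*Complex.I))) := by ring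
      _ = a * (1/2:ℂ)^m * Complex.exp ((m:ℂ)*((θ:ℂ)*Complex.I) +
            -(n:ℂ)*((θ:ℂ)*Complex.I)) := by rw [Complex.exp_add]
      _ = a * (1/2:ℂ)^m * Complex.exp ((((m:ℂ) - n) * Complex.I) * (θ:ℂ)) := by
            rw [show (m:ℂ)*((θ:ℂ)*Complex.I) + -(n:ℂ)*((θ:ℂ)*Complex.I)
              = (((m:ℂ) - n) * Complex.I) * (θ:ℂ) by ring]
  simp only [hint]
  rw [intervalIntegral.integral_const_mul]
  by_cases hmn : m = n
  · subst hmn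
    simp only [sub_self, zero_mul, Complex.exp_zero]
    rw [intervalIntegral.integral_const]
    simp only [sub_zero, if_pos rfl]
    rw [Complex.real_smul]
    push_cast
    ring
  · have hc : (((m:ℂ) - n) * Complex.I) ≠ 0 := by
      apply mul_ne_zero _ Complex.I_ne_zero
      rw [sub_ne_zero]
      exact_mod_cast hmn
    rw [integral_exp_mul_complex hc]
    rw [if_neg hmn]
    have h2pi : (((m:ℂ) - n) * Complex.I) * ((2*Real.pi : ℝ) : ℂ)
        = (((m - n : ℤ)) : ℂ) * (2*(Real.pi:ℂ)*Complex.I) := by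
      push_cast
      ring
    rw [h2pi, Complex.exp_int_mul_two_pi_mul_I]
    simp

lemma integral_polysum (n K : ℕ) (a : ℕ → ℂ) (hn : n < K) :
    (∫ θ in (0:ℝ)..(2*Real.pi), (∑ m ∈ range K, a m *
        ((1/2 : ℂ) * Complex.exp ((θ:ℂ) * Complex.I))^m) *
      Complex.exp (-(n:ℂ) * ((θ:ℂ) * Complex.I)))
    = a n * (2*Real.pi) * (1/2:ℂ)^n := by
  have hrw : ∀ θ : ℝ, (∑ m ∈ range K, a m * ((1/2:ℂ) * Complex.exp ((θ:ℂ)*Complex.I))^m) *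
        Complex.exp (-(n:ℂ)*((θ:ℂ)*Complex.I))
      = ∑ m ∈ range K, (a m * ((1/2:ℂ)*Complex.exp ((θ:ℂ)*Complex.I))^m *
        Complex.exp (-(n:ℂ)*((θ:ℂ)*Complex.I))) := fun θ => Finset.sum_mul _ _ _
  simp only [hrw]
  rw [intervalIntegral.integral_finset_sum]
  · rw [Finset.sum_congr rfl fun m _ => integral_monomial n m (a m)]
    rw [Finset.sum_ite_eq' (range K) n (fun m => a m * (2*Real.pi) * (1/2:ℂ)^n)]
    rw [if_pos (Finset.mem_range.2 hn)]
  · intro m _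
    apply Continuous.intervalIntegrable
    exact cont_integrand (fun z => a m * z^m) (by continuity) n

lemma norm_w (θ : ℝ) : ‖(1/2 : ℂ) * Complex.exp ((θ:ℂ) * Complex.I)‖ = 1/2 := by
  rw [norm_mul, Complex.norm_exp_ofReal_mul_I]
  norm_num

lemma norm_en (n : ℕ) (θ : ℝ) : ‖Complex.exp (-(n:ℂ) * ((θ:ℂ) * Complex.I))‖ = 1 := by
  rw [show -(n:ℂ) * ((θ:ℂ) * Complex.I) = ((-((n:ℝ)*θ) : ℝ) : ℂ) * Complex.I by push_cast; ring]
  rw [Complex.norm_exp_ofReal_mul_I]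

lemma norm_cc (m : ℕ) : ‖cc m‖ = (Real.pi/4)^m / m.factorial := by
  rw [cc, norm_mul, norm_div, norm_pow, norm_pow, norm_neg, norm_one, one_pow, norm_div]
  rw [Complex.norm_natCast, Complex.norm_real, Real.norm_eq_abs,
    abs_of_pos Real.pi_pos]
  norm_num
  ring

lemma hasSum_Ffun (z : ℂ) : HasSum (fun m => cc m * z^m) (Ffun z) := by
  have hcos := Complex.hasSum_cos ((Real.pi : ℂ) * z / 4)
  have hsin := Complex.hasSum_sin ((Real.pi : ℂ) * z / 4)
  rw [Ffun]
  apply HasSum.even_add_odd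
  · have he : (fun k => cc (2*k) * z^(2*k))
        = fun k => (-1)^k * ((Real.pi : ℂ) * z / 4)^(2*k) / ((2*k).factorial : ℂ) := by
      funext k
      rw [cc, Nat.mul_div_cancel_left k (by norm_num)]
      rw [show ((Real.pi : ℂ) * z / 4)^(2*k) = ((Real.pi : ℂ)/4)^(2*k) * z^(2*k) by
        rw [← mul_pow]; ring_nf]
      ring
    rw [he]
    exact hcos
  · have ho : (fun k => cc (2*k+1) * z^(2*k+1))
        = fun k => (-1)^k * ((Real.pi : ℂ) * z / 4)^(2*k+1) / ((2*k+1).factorial : ℂ) := by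
      funext k
      rw [cc, show (2*k+1)/2 = k from by omega]
      rw [show ((Real.pi : ℂ) * z / 4)^(2*k+1) = ((Real.pi : ℂ)/4)^(2*k+1) * z^(2*k+1) by
        rw [← mul_pow]; ring_nf]
      ring
    rw [ho]
    exact hsin

lemma partial_sum_bound (K : ℕ) (w : ℂ) (hw : ‖w‖ ≤ 1/2) :
    ‖∑ m ∈ range K, cc m * w^m‖ ≤ Real.exp 1 := by
  calc ‖∑ m ∈ range K, cc m * w^m‖ ≤ ∑ m ∈ range K, ‖cc m * w^m‖ := norm_sum_le _ _
    _ ≤ ∑ m ∈ range K, (Real.pi/8)^m / m.factorial := by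
        refine Finset.sum_le_sum fun m _ => ?_
        rw [norm_mul, norm_cc, norm_pow]
        have h1 : ‖w‖^m ≤ (1/2:ℝ)^m := pow_le_pow_left₀ (norm_nonneg w) hw m
        have h2 : (0:ℝ) ≤ (Real.pi/4)^m / m.factorial := by positivity
        calc (Real.pi/4)^m / m.factorial * ‖w‖^m
            ≤ (Real.pi/4)^m / m.factorial * (1/2:ℝ)^m :=
              mul_le_mul_of_nonneg_left h1 h2
          _ = (Real.pi/8)^m / m.factorial := by
              rw [div_mul_eq_mul_div, ← mul_pow, show Real.pi/4 * (1/2) = Real.pi/8 by ring]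
    _ ≤ Real.exp (Real.pi/8) := Real.sum_le_exp_of_nonneg (by positivity) K
    _ ≤ Real.exp 1 := Real.exp_le_exp.2 (by nlinarith [Real.pi_le_four])

lemma integral_Ffun (n : ℕ) :
    (∫ θ in (0:ℝ)..(2*Real.pi), Ffun ((1/2 : ℂ) * Complex.exp ((θ:ℂ) * Complex.I)) *
      Complex.exp (-(n:ℂ) * ((θ:ℂ) * Complex.I)))
    = cc n * (2*Real.pi) * (1/2:ℂ)^n := by
  have hK : Tendsto (fun K => ∫ θ in (0:ℝ)..(2*Real.pi), (∑ m ∈ range K, cc m *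
      ((1/2 : ℂ) * Complex.exp ((θ:ℂ)*Complex.I))^m) *
      Complex.exp (-(n:ℂ)*((θ:ℂ)*Complex.I))) atTop
      (𝓝 (∫ θ in (0:ℝ)..(2*Real.pi), Ffun ((1/2 : ℂ) * Complex.exp ((θ:ℂ) * Complex.I)) *
        Complex.exp (-(n:ℂ) * ((θ:ℂ) * Complex.I)))) := by
    apply intervalIntegral.tendsto_integral_filter_of_dominated_convergence
      (bound := fun _ => Real.exp 1)
    · refine Eventually.of_forall fun K => Continuous.aestronglyMeasurable ?_
      exact cont_integrand (fun z => ∑ m ∈ range K, cc m * z^m)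
        (by continuity) n
    · refine Eventually.of_forall fun K => Eventually.of_forall fun θ _ => ?_
      rw [norm_mul, norm_en, mul_one]
      exact partial_sum_bound K _ (le_of_eq (norm_w θ))
    · exact intervalIntegrable_const
    · refine Eventually.of_forall fun θ _ => ?_
      exact ((hasSum_Ffun _).tendsto_sum_nat).mul_const _
  have h2 : Tendsto (fun K => ∫ θ in (0:ℝ)..(2*Real.pi), (∑ m ∈ range K, cc m *
      ((1/2 : ℂ) * Complex.exp ((θ:ℂ)*Complex.I))^m) *
      Complex.exp (-(n:ℂ)*((θ:ℂ)*Complex.I))) atTop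
      (𝓝 (cc n * (2*Real.pi) * (1/2:ℂ)^n)) := by
    refine Tendsto.congr' ?_ tendsto_const_nhds
    filter_upwards [eventually_gt_atTop n] with K hK
    exact (integral_polysum n K cc hK).symm
  exact (tendsto_nhds_unique h2 hK).symm

lemma integral_Q (n N : ℕ) (hn : n ≤ N) :
    (∫ θ in (0:ℝ)..(2*Real.pi), Q N ((1/2 : ℂ) * Complex.exp ((θ:ℂ) * Complex.I)) *
      Complex.exp (-(n:ℂ) * ((θ:ℂ) * Complex.I)))
    = multipleLPartial chi4 n N * (2*Real.pi) * (1/2:ℂ)^n := by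
  simp only [Q_eq_sum]
  exact integral_polysum n (N+1) _ (by omega)

lemma key (n : ℕ) : Tendsto (fun N => multipleLPartial chi4 n N) atTop (𝓝 (cc n)) := by
  have hDCT : Tendsto (fun N => ∫ θ in (0:ℝ)..(2*Real.pi),
      Q N ((1/2 : ℂ) * Complex.exp ((θ:ℂ) * Complex.I)) *
      Complex.exp (-(n:ℂ) * ((θ:ℂ) * Complex.I))) atTop
      (𝓝 (∫ θ in (0:ℝ)..(2*Real.pi), Ffun ((1/2 : ℂ) * Complex.exp ((θ:ℂ) * Complex.I)) *
        Complex.exp (-(n:ℂ) * ((θ:ℂ) * Complex.I)))) := by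
    apply intervalIntegral.tendsto_integral_filter_of_dominated_convergence
      (bound := fun _ => 3/2 * Real.exp 4)
    · refine Eventually.of_forall fun N => Continuous.aestronglyMeasurable ?_
      refine cont_integrand (Q N) ?_ n
      unfold Q
      exact continuous_finset_prod _ fun k _ => by fun_prop
    · refine Eventually.of_forall fun N => Eventually.of_forall fun θ _ => ?_
      rw [norm_mul, norm_en, mul_one]
      exact Q_bound N _ (le_of_eq (norm_w θ))
    · exact intervalIntegrable_const
    · refine Eventually.of_forall fun θ _ => ?_
      exact (Q_tendsto _ (le_of_eq (norm_w θ))).mul_const _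
  rw [integral_Ffun n] at hDCT
  have hc : ((2:ℂ) * (Real.pi:ℂ) * (1/2:ℂ)^n) ≠ 0 :=
    mul_ne_zero (mul_ne_zero two_ne_zero (Complex.ofReal_ne_zero.2 Real.pi_ne_zero))
      (pow_ne_zero _ (by norm_num))
  have cancel : ∀ x : ℂ, x * (2*Real.pi) * (1/2:ℂ)^n *
      ((2:ℂ) * (Real.pi:ℂ) * (1/2:ℂ)^n)⁻¹ = x := by
    intro x
    rw [show x * (2*Real.pi) * (1/2:ℂ)^n = x * ((2:ℂ) * (Real.pi:ℂ) * (1/2:ℂ)^n) by ring,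
      mul_assoc, mul_inv_cancel₀ hc, mul_one]
  have h4 := hDCT.mul_const (((2:ℂ) * (Real.pi:ℂ) * (1/2:ℂ)^n)⁻¹)
  rw [cancel (cc n)] at h4
  refine Tendsto.congr' ?_ h4
  filter_upwards [eventually_ge_atTop n] with N hN
  rw [integral_Q n N hN, cancel]


end MLV

/-- Corollary 3(b): for the nonprincipal character mod 4,
`L_{2n}(χ) = ((-1)^n/(2n)!)(π/4)^{2n}` and
`L_{2n+1}(χ) = ((-1)^n/(2n+1)!)(π/4)^{2n+1}`. -/
theorem multiple_L_values_mod_four (χ : ℕ → ℂ)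
    (hχ : ∀ k, χ k = if k % 4 = 1 then 1 else if k % 4 = 3 then -1 else 0) :
    (∀ n : ℕ, 1 ≤ n →
      Tendsto (fun N => multipleLPartial χ (2 * n) N) atTop
        (nhds ((-1) ^ n / (Nat.factorial (2 * n) : ℂ) * ((Real.pi : ℂ) / 4) ^ (2 * n)))) ∧
    (∀ n : ℕ,
      Tendsto (fun N => multipleLPartial χ (2 * n + 1) N) atTop
        (nhds ((-1) ^ n / ((Nat.factorial (2 * n + 1) : ℂ)) *
          ((Real.pi : ℂ) / 4) ^ (2 * n + 1)))) := by
  have hchi : ∀ k, χ k = MLV.chi4 k := fun k => (hχ k).trans rfl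
  constructor
  · intro n _
    have h := MLV.key (2 * n)
    have hcc : MLV.cc (2 * n) = (-1)^n / (Nat.factorial (2*n) : ℂ) * ((Real.pi : ℂ)/4)^(2*n) := by
      rw [MLV.cc, show (2*n)/2 = n from by omega]
    rw [hcc] at h
    refine h.congr fun N => ?_
    rw [MLV.multipleLPartial_congr χ hchi]
  · intro n
    have h := MLV.key (2 * n + 1)
    have hcc : MLV.cc (2 * n + 1)
        = (-1)^n / (Nat.factorial (2*n+1) : ℂ) * ((Real.pi : ℂ)/4)^(2*n+1) := by
      rw [MLV.cc, show (2*n+1)/2 = n from by omega]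
    rw [hcc] at h
    refine h.congr fun N => ?_
    rw [MLV.multipleLPartial_congr χ hchi]
end
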